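/- arXiv:math/0306270 — 5 statements merged into one kernel-verified Lean document; each statement's English description precedes it below -/
import Mathlib

section
/- In the setting below, for each 0 ≤ j ≤ g the subgroup of M_ℚ generated by Γ_j equals M_j. -/
open Finset

noncomputable def dotR {d : ℕ} (a u : Fin d → ℝ) : ℝ := ∑ i, a i * u i

def icastR {d : ℕ} (x : Fin d → ℤ) : Fin d → ℝ := fun i => (x i : ℝ)
def qcastR {d : ℕ} (x : Fin d → ℚ) : Fin d → ℝ := fun i => (x i : ℝ)

/-- The convex cone generated by a set: all finite nonnegative linear combinations. -/
def nonnegSpan {d : ℕ} (s : Set (Fin d → ℝ)) : Set (Fin d → ℝ) :=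
  {x | ∃ (n : ℕ) (c : Fin n → ℝ) (v : Fin n → (Fin d → ℝ)),
    (∀ i, 0 ≤ c i) ∧ (∀ i, v i ∈ s) ∧ x = ∑ i, c i • v i}

/-- A rational polyhedral cone: generated by finitely many lattice vectors. -/
def IsRatPolyCone {d : ℕ} (ρ : Set (Fin d → ℝ)) : Prop :=
  ∃ s : Finset (Fin d → ℤ), ρ = nonnegSpan (icastR '' (s : Set (Fin d → ℤ)))

/-- The dual cone w.r.t. the standard pairing on `ℝ^d`. -/
def dualSet {d : ℕ} (ρ : Set (Fin d → ℝ)) : Set (Fin d → ℝ) :=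
  {u | ∀ a ∈ ρ, 0 ≤ dotR a u}

/-- The partial order `u ≤_ρ u'` iff `u' − u ∈ ρ^∨`. -/
def leRho {d : ℕ} (ρ : Set (Fin d → ℝ)) (u u' : Fin d → ℚ) : Prop :=
  qcastR (u' - u) ∈ dualSet ρ

def ltRho {d : ℕ} (ρ : Set (Fin d → ℝ)) (u u' : Fin d → ℚ) : Prop :=
  leRho ρ u u' ∧ u ≠ u'

/-- The lattice `ℤ^d` inside `ℚ^d`. -/
def intCastHomQ (d : ℕ) : (Fin d → ℤ) →+ (Fin d → ℚ) where
  toFun x := fun i => (x i : ℚ)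
  map_zero' := by funext i; simp
  map_add' x y := by funext i; simp

def zLatQ (d : ℕ) : AddSubgroup (Fin d → ℚ) := (intCastHomQ d).range

open Finset in
/-- The semigroup `Γ_j = (ρ^∨ ∩ M) + ℕγ₁ + ⋯ + ℕγ_j` (as a subset of `ℚ^d`). -/
def GammaSet {d : ℕ} (ρ : Set (Fin d → ℝ)) (γ : ℕ → Fin d → ℚ) (j : ℕ) :
    Set (Fin d → ℚ) :=
  {u | ∃ (α : Fin d → ℤ) (l : ℕ → ℕ), icastR α ∈ dualSet ρ ∧
    u = intCastHomQ d α + ∑ i ∈ Icc 1 j, (l i : ℚ) • γ i}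

section Aux

variable {d : ℕ} {ρ : Set (Fin d → ℝ)}

lemma dotR_zero_right (a : Fin d → ℝ) : dotR a 0 = 0 := by
  simp [dotR]

lemma dotR_add_right (a u v : Fin d → ℝ) : dotR a (u + v) = dotR a u + dotR a v := by
  simp [dotR, mul_add, Finset.sum_add_distrib]

lemma dotR_smul_right (a : Fin d → ℝ) (c : ℝ) (u : Fin d → ℝ) :
    dotR a (c • u) = c * dotR a u := by
  simp only [dotR, Pi.smul_apply, smul_eq_mul, Finset.mul_sum]
  exact Finset.sum_congr rfl fun i _ => by ring

lemma zero_mem_dualSet : (0 : Fin d → ℝ) ∈ dualSet ρ := fun a _ => by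
  simp [dotR_zero_right]

lemma dualSet_convex : Convex ℝ (dualSet ρ) := by
  intro u hu v hv s t hs ht _
  intro a ha
  have h1 := hu a ha
  have h2 := hv a ha
  rw [dotR_add_right, dotR_smul_right, dotR_smul_right]
  positivity

lemma dualSet_smul_mem {c : ℝ} (hc : 0 ≤ c) {u : Fin d → ℝ} (hu : u ∈ dualSet ρ) :
    c • u ∈ dualSet ρ := by
  intro a ha
  rw [dotR_smul_right]
  exact mul_nonneg hc (hu a ha)

lemma icastR_add (x y : Fin d → ℤ) : icastR (x + y) = icastR x + icastR y := by
  funext i; simp [icastR]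

lemma icastR_zero : icastR (0 : Fin d → ℤ) = 0 := by
  funext i; simp [icastR]

/-- There is a lattice point deep inside the dual cone. -/
lemma exists_deep (hddim : Submodule.span ℝ (dualSet ρ) = ⊤) :
    ∃ m : Fin d → ℤ, icastR m ∈ dualSet ρ ∧
      ∀ i, icastR (m + Pi.single i 1) ∈ dualSet ρ := by
  have h0 : (0 : Fin d → ℝ) ∈ dualSet ρ := zero_mem_dualSet
  have htop : affineSpan ℝ (dualSet ρ) = ⊤ := by
    rw [AffineSubspace.affineSpan_eq_top_iff_vectorSpan_eq_top_of_nonempty ℝ _ _ ⟨0, h0⟩]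
    rw [vectorSpan_eq_span_vsub_set_right ℝ h0]
    have : (fun x => x -ᵥ (0 : Fin d → ℝ)) '' dualSet ρ = dualSet ρ := by
      ext y; simp [vsub_eq_sub]
    rw [this]; exact hddim
  obtain ⟨x, hx⟩ := (dualSet_convex.interior_nonempty_iff_affineSpan_eq_top (s := dualSet ρ)).mpr htop
  obtain ⟨ε, hε, hball⟩ := Metric.isOpen_iff.mp isOpen_interior x hx
  replace hball : Metric.ball x ε ⊆ dualSet ρ := hball.trans interior_subset
  obtain ⟨k, hk⟩ := exists_nat_gt (3 / ε)
  have hk3 : 3 < (k : ℝ) * ε := by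
    rw [div_lt_iff₀ hε] at hk; linarith
  have hk0 : (0 : ℝ) < k := by nlinarith
  have hball2 : Metric.ball ((k : ℝ) • x) ((k : ℝ) * ε) ⊆ dualSet ρ := by
    intro y hy
    have hmem : (k : ℝ)⁻¹ • y ∈ Metric.ball x ε := by
      rw [Metric.mem_ball, dist_eq_norm] at hy ⊢
      have heq : (k : ℝ)⁻¹ • y - x = (k : ℝ)⁻¹ • (y - (k : ℝ) • x) := by
        rw [smul_sub, inv_smul_smul₀ (ne_of_gt hk0)]
      rw [heq, norm_smul, norm_inv, Real.norm_eq_abs, abs_of_pos hk0]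
      rw [inv_mul_lt_iff₀ hk0]
      linarith
    have := dualSet_smul_mem (le_of_lt hk0) (hball hmem)
    rwa [smul_inv_smul₀ (ne_of_gt hk0)] at this
  set m : Fin d → ℤ := fun i => ⌊(k : ℝ) * x i⌋ with hm
  have hmx : ∀ z : Fin d → ℝ, ‖z‖ ≤ 1 → icastR m + z ∈ dualSet ρ := by
    intro z hz
    apply hball2
    rw [Metric.mem_ball, dist_eq_norm]
    have h1 : ‖icastR m - (k : ℝ) • x‖ ≤ 1 := by
      rw [pi_norm_le_iff_of_nonneg zero_le_one]
      intro i
      have hfl : (k : ℝ) * x i - 1 < (⌊(k : ℝ) * x i⌋ : ℝ) := Int.sub_one_lt_floor _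
      have hfl2 : ((⌊(k : ℝ) * x i⌋ : ℝ)) ≤ (k : ℝ) * x i := Int.floor_le _
      rw [Pi.sub_apply, Pi.smul_apply, smul_eq_mul, Real.norm_eq_abs, abs_le]
      constructor <;> simp [icastR, hm] <;> linarith
    calc ‖icastR m + z - (k : ℝ) • x‖ ≤ ‖icastR m - (k : ℝ) • x‖ + ‖z‖ := by
            have : icastR m + z - (k : ℝ) • x = (icastR m - (k : ℝ) • x) + z := by ring_nf
            rw [this]; exact norm_add_le _ _
      _ ≤ 2 := by linarith
      _ < (k : ℝ) * ε := by linarith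
  refine ⟨m, ?_, ?_⟩
  · have := hmx 0 (by simp)
    simpa using this
  · intro i
    have hz : ‖icastR (Pi.single i 1 : Fin d → ℤ)‖ ≤ 1 := by
      rw [pi_norm_le_iff_of_nonneg zero_le_one]
      intro j
      rcases eq_or_ne j i with rfl | hji
      · simp [icastR]
      · simp [icastR, Pi.single_apply, hji]
    have := hmx _ hz
    rwa [icastR_add]

lemma intCastHomQ_apply (x : Fin d → ℤ) (i : Fin d) : intCastHomQ d x i = (x i : ℚ) := rfl

end Aux

/-- The subgroup of `M_ℚ` generated by `Γ_j` equals `M_j`, for `0 ≤ j ≤ g`. -/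
theorem stmt_6
    (d g : ℕ) (hd : 1 ≤ d) (hg : 1 ≤ g)
    (ρ : Set (Fin d → ℝ))
    (hρ : IsRatPolyCone ρ)
    (hρsc : ∀ x ∈ ρ, -x ∈ ρ → x = 0)
    (hρdim : Submodule.span ℝ ρ = ⊤)
    (hdsc : ∀ u ∈ dualSet ρ, -u ∈ dualSet ρ → u = 0)
    (hddim : Submodule.span ℝ (dualSet ρ) = ⊤)
    (lam : ℕ → Fin d → ℚ)
    (hlam_mem : ∀ j, 1 ≤ j → j ≤ g → qcastR (lam j) ∈ dualSet ρ)
    (hlam_lt : ∀ j, 1 ≤ j → j < g → ltRho ρ (lam j) (lam (j + 1)))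
    (Ms : ℕ → AddSubgroup (Fin d → ℚ))
    (hM0 : Ms 0 = zLatQ d)
    (hMs : ∀ j, 1 ≤ j → j ≤ g → Ms j = Ms (j - 1) ⊔ AddSubgroup.closure {lam j})
    (hlam_not : ∀ j, 1 ≤ j → j ≤ g → lam j ∉ Ms (j - 1))
    (nj : ℕ → ℕ)
    (hnj : ∀ j, 1 ≤ j → j ≤ g → nj j = (Ms (j - 1)).relIndex (Ms j))
    (hnj2 : ∀ j, 1 ≤ j → j ≤ g → 2 ≤ nj j)
    (γ : ℕ → Fin d → ℚ)
    (hγ1 : γ 1 = lam 1)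
    (hγrec : ∀ j, 1 ≤ j → j < g → γ (j + 1) = (nj j : ℚ) • γ j + lam (j + 1) - lam j)
    :
    ∀ j, j ≤ g → AddSubgroup.closure (GammaSet ρ γ j) = Ms j := by
  -- Monotonicity of Ms
  have hMono : ∀ b, b ≤ g → ∀ a, a ≤ b → Ms a ≤ Ms b := by
    intro b
    induction b with
    | zero =>
      intro _ a ha
      have : a = 0 := Nat.le_zero.mp ha
      subst this; exact le_rfl
    | succ b ih =>
      intro hb a ha
      rcases Nat.eq_or_lt_of_le ha with rfl | hlt
      · exact le_refl _
      · have h1 : Ms a ≤ Ms b := ih (by omega) a (by omega)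
        have h2 : Ms (b + 1) = Ms b ⊔ AddSubgroup.closure {lam (b + 1)} := by
          have := hMs (b + 1) (by omega) hb
          simpa using this
        rw [h2]
        exact h1.trans le_sup_left
  have hlamMem : ∀ i, 1 ≤ i → i ≤ g → lam i ∈ Ms i := by
    intro i h1 h2
    rw [hMs i h1 h2]
    exact AddSubgroup.mem_sup_right (AddSubgroup.subset_closure rfl)
  -- γ i ∈ Ms i
  have hγMem : ∀ i, 1 ≤ i → i ≤ g → γ i ∈ Ms i := by
    intro i h1
    induction i, h1 using Nat.le_induction with
    | base => intro h2; rw [hγ1]; exact hlamMem 1 le_rfl h2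
    | succ i hi ih =>
      intro h2
      rw [hγrec i hi (by omega)]
      have hγi : γ i ∈ Ms (i + 1) := hMono (i+1) h2 i (by omega) (ih (by omega))
      have hli : lam i ∈ Ms (i + 1) := hMono (i+1) h2 i (by omega) (hlamMem i hi (by omega))
      have hsm : (nj i : ℚ) • γ i ∈ Ms (i + 1) := by
        rw [Nat.cast_smul_eq_nsmul]
        exact AddSubgroup.nsmul_mem _ hγi _
      exact AddSubgroup.sub_mem _ (AddSubgroup.add_mem _ hsm (hlamMem (i+1) (by omega) h2)) hli
  -- GammaSet j ⊆ Ms j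
  have hGsub : ∀ j, j ≤ g → GammaSet ρ γ j ⊆ (Ms j : Set (Fin d → ℚ)) := by
    intro j hj u hu
    obtain ⟨α, l, hα, rfl⟩ := hu
    apply AddSubgroup.add_mem
    · have : intCastHomQ d α ∈ Ms 0 := by
        rw [hM0]; exact ⟨α, rfl⟩
      exact hMono j hj 0 (Nat.zero_le _) this
    · apply AddSubgroup.sum_mem
      intro i hi
      rw [Finset.mem_Icc] at hi
      rw [Nat.cast_smul_eq_nsmul]
      exact AddSubgroup.nsmul_mem _ (hMono j hj i hi.2 (hγMem i hi.1 (hi.2.trans hj))) _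
  -- GammaSet j ⊆ GammaSet (j+1)
  have hGmono : ∀ j, GammaSet ρ γ j ⊆ GammaSet ρ γ (j + 1) := by
    intro j u hu
    obtain ⟨α, l, hα, rfl⟩ := hu
    refine ⟨α, Function.update l (j + 1) 0, hα, ?_⟩
    rw [Finset.sum_Icc_succ_top (by omega)]
    simp only [Function.update_self, Nat.cast_zero, zero_smul, add_zero]
    congr 1
    apply Finset.sum_congr rfl
    intro i hi
    rw [Finset.mem_Icc] at hi
    rw [Function.update_of_ne (by omega)]
  -- γ (j+1) ∈ GammaSet (j+1)
  have hγmemG : ∀ j, γ (j + 1) ∈ GammaSet ρ γ (j + 1) := by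
    intro j
    refine ⟨0, fun i => if i = j + 1 then 1 else 0, by
      rw [icastR_zero]; exact zero_mem_dualSet, ?_⟩
    rw [map_zero, zero_add, Finset.sum_Icc_succ_top (by omega), Finset.sum_eq_zero, zero_add]
    · simp
    · intro i hi
      rw [Finset.mem_Icc] at hi
      simp [show i ≠ j + 1 by omega]
  -- Main induction
  intro j
  induction j with
  | zero =>
    intro _
    rw [hM0]
    apply le_antisymm
    · rw [AddSubgroup.closure_le]
      intro u hu
      obtain ⟨α, l, hα, rfl⟩ := hu
      have : Finset.Icc 1 0 = (∅ : Finset ℕ) := by simp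
      rw [this, Finset.sum_empty, add_zero]
      exact ⟨α, rfl⟩
    · obtain ⟨m, hm, hmi⟩ := exists_deep hddim
      rintro u ⟨α, rfl⟩
      have hmemG : ∀ β : Fin d → ℤ, icastR β ∈ dualSet ρ →
          intCastHomQ d β ∈ AddSubgroup.closure (GammaSet ρ γ 0) := by
        intro β hβ
        apply AddSubgroup.subset_closure
        exact ⟨β, fun _ => 0, hβ, by simp⟩
      have hsingle : ∀ i : Fin d, intCastHomQ d (Pi.single i 1) ∈
          AddSubgroup.closure (GammaSet ρ γ 0) := by
        intro i
        have : intCastHomQ d (Pi.single i 1) =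
            intCastHomQ d (m + Pi.single i 1) - intCastHomQ d m := by
          rw [map_add]; abel
        rw [this]
        exact AddSubgroup.sub_mem _ (hmemG _ (hmi i)) (hmemG _ hm)
      have hα : α = ∑ i : Fin d, Pi.single i (α i) := (Finset.univ_sum_single α).symm
      rw [hα, map_sum]
      apply AddSubgroup.sum_mem
      intro i _
      have : intCastHomQ d (Pi.single i (α i)) = (α i) • intCastHomQ d (Pi.single i 1) := by
        funext j
        rcases eq_or_ne j i with rfl | hji
        · simp [intCastHomQ_apply]
        · simp [intCastHomQ_apply, Pi.single_apply, hji]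
      rw [this]
      exact AddSubgroup.zsmul_mem _ (hsingle i) _
  | succ j ih =>
    intro hj1
    apply le_antisymm
    · rw [AddSubgroup.closure_le]
      exact hGsub (j + 1) hj1
    · have hMeq : Ms (j + 1) = Ms j ⊔ AddSubgroup.closure {lam (j + 1)} := by
        have := hMs (j + 1) (by omega) hj1
        simpa using this
      rw [hMeq]
      have hMsj : Ms j ≤ AddSubgroup.closure (GammaSet ρ γ (j + 1)) := by
        rw [← ih (by omega)]
        exact AddSubgroup.closure_mono (hGmono j)
      apply sup_le hMsj
      rw [AddSubgroup.closure_le]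
      intro u hu
      rw [Set.mem_singleton_iff] at hu
      subst hu
      rcases Nat.eq_zero_or_pos j with rfl | hj0
      · have : lam 1 = γ 1 := hγ1.symm
        rw [this]
        exact AddSubgroup.subset_closure (hγmemG 0)
      · have hrec := hγrec j hj0 (by omega)
        have hlamj : lam j ∈ AddSubgroup.closure (GammaSet ρ γ (j + 1)) :=
          hMsj (hlamMem j hj0 (by omega))
        have hγj : (nj j : ℚ) • γ j ∈ AddSubgroup.closure (GammaSet ρ γ (j + 1)) := by
          rw [Nat.cast_smul_eq_nsmul]
          exact AddSubgroup.nsmul_mem _ (hMsj (hγMem j hj0 (by omega))) _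
        have hγj1 : γ (j + 1) ∈ AddSubgroup.closure (GammaSet ρ γ (j + 1)) :=
          AddSubgroup.subset_closure (hγmemG j)
        have : lam (j + 1) = γ (j + 1) + lam j - (nj j : ℚ) • γ j := by
          rw [hrec]; abel
        rw [this]
        exact AddSubgroup.sub_mem _ (AddSubgroup.add_mem _ hγj1 hlamj) hγj
end

section
/- In the setting below: (i) γ_j >_ρ n_{j-1}γ_{j-1} for j = 2, …, g; (ii) for every j = 1, …, g and every u ∈ ρ^∨ ∩ M_j, one has u + n_jγ_j ∈ Γ_j. -/
open Finset

/-! ### Auxiliary lemmas -/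

lemma aux_qcastR_add {d : ℕ} (u v : Fin d → ℚ) : qcastR (u + v) = qcastR u + qcastR v := by
  funext i; simp [qcastR]

lemma aux_qcastR_qsmul {d : ℕ} (q : ℚ) (u : Fin d → ℚ) :
    qcastR (q • u) = (q : ℝ) • qcastR u := by
  funext i; simp [qcastR]

lemma aux_dual_add {d : ℕ} {ρ : Set (Fin d → ℝ)} {x y : Fin d → ℝ}
    (hx : x ∈ dualSet ρ) (hy : y ∈ dualSet ρ) : x + y ∈ dualSet ρ := by
  intro a ha
  have h : dotR a (x + y) = dotR a x + dotR a y := by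
    simp [dotR, mul_add, Finset.sum_add_distrib]
  rw [h]
  have := hx a ha; have := hy a ha; linarith

lemma aux_dual_smul {d : ℕ} {ρ : Set (Fin d → ℝ)} {c : ℝ} (hc : 0 ≤ c) {x : Fin d → ℝ}
    (hx : x ∈ dualSet ρ) : c • x ∈ dualSet ρ := by
  intro a ha
  have h : dotR a (c • x) = c * dotR a x := by
    simp [dotR, Finset.mul_sum, mul_left_comm]
  rw [h]
  exact mul_nonneg hc (hx a ha)

lemma aux_dq_add {d : ℕ} {ρ : Set (Fin d → ℝ)} {u v : Fin d → ℚ}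
    (hu : qcastR u ∈ dualSet ρ) (hv : qcastR v ∈ dualSet ρ) :
    qcastR (u + v) ∈ dualSet ρ := by
  rw [aux_qcastR_add]; exact aux_dual_add hu hv

lemma aux_dq_nsmul {d : ℕ} {ρ : Set (Fin d → ℝ)} (n : ℕ) {v : Fin d → ℚ}
    (hv : qcastR v ∈ dualSet ρ) : qcastR ((n : ℚ) • v) ∈ dualSet ρ := by
  rw [aux_qcastR_qsmul]
  exact aux_dual_smul (by positivity) hv

lemma aux_gammaSet_step {d : ℕ} {ρ : Set (Fin d → ℝ)} {γ : ℕ → Fin d → ℚ} {j k : ℕ}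
    {w : Fin d → ℚ} (hw : w ∈ GammaSet ρ γ j) :
    w + (k : ℚ) • γ (j + 1) ∈ GammaSet ρ γ (j + 1) := by
  obtain ⟨α, l, hα, rfl⟩ := hw
  refine ⟨α, fun i => if i = j + 1 then k else l i, hα, ?_⟩
  have hins : Icc 1 (j + 1) = insert (j + 1) (Icc 1 j) := by
    ext x; simp only [Finset.mem_Icc, Finset.mem_insert]; omega
  have hnot : (j + 1) ∉ Icc 1 j := by simp
  rw [hins, Finset.sum_insert hnot]
  have hc : ∀ i ∈ Icc 1 j,
      ((if i = j + 1 then k else l i : ℕ) : ℚ) • γ i = (l i : ℚ) • γ i := by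
    intro i hi
    simp only [Finset.mem_Icc] at hi
    rw [if_neg (by omega)]
  simp only [if_pos rfl, Finset.sum_congr rfl hc]
  abel

lemma aux_gammaSet_zero {d : ℕ} {ρ : Set (Fin d → ℝ)} {γ : ℕ → Fin d → ℚ}
    {w : Fin d → ℚ} (hw : w ∈ zLatQ d) (hdq : qcastR w ∈ dualSet ρ) :
    w ∈ GammaSet ρ γ 0 := by
  obtain ⟨α, rfl⟩ := hw
  refine ⟨α, fun _ => 0, ?_, ?_⟩
  · have h : icastR α = qcastR (intCastHomQ d α) := by
      funext i; simp [icastR, qcastR, intCastHomQ]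
    rw [h]; exact hdq
  · rw [show Icc 1 0 = (∅ : Finset ℕ) by rfl]
    simp

/-- (i) `γ_j >_ρ n_{j-1}γ_{j-1}` for `2 ≤ j ≤ g`; (ii) for `1 ≤ j ≤ g` and `u ∈ ρ^∨ ∩ M_j`, one has `u + n_jγ_j ∈ Γ_j`. -/
theorem stmt_8
    (d g : ℕ) (hd : 1 ≤ d) (hg : 1 ≤ g)
    (ρ : Set (Fin d → ℝ))
    (hρ : IsRatPolyCone ρ)
    (hρsc : ∀ x ∈ ρ, -x ∈ ρ → x = 0)
    (hρdim : Submodule.span ℝ ρ = ⊤)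
    (hdsc : ∀ u ∈ dualSet ρ, -u ∈ dualSet ρ → u = 0)
    (hddim : Submodule.span ℝ (dualSet ρ) = ⊤)
    (lam : ℕ → Fin d → ℚ)
    (hlam_mem : ∀ j, 1 ≤ j → j ≤ g → qcastR (lam j) ∈ dualSet ρ)
    (hlam_lt : ∀ j, 1 ≤ j → j < g → ltRho ρ (lam j) (lam (j + 1)))
    (Ms : ℕ → AddSubgroup (Fin d → ℚ))
    (hM0 : Ms 0 = zLatQ d)
    (hMs : ∀ j, 1 ≤ j → j ≤ g → Ms j = Ms (j - 1) ⊔ AddSubgroup.closure {lam j})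
    (hlam_not : ∀ j, 1 ≤ j → j ≤ g → lam j ∉ Ms (j - 1))
    (nj : ℕ → ℕ)
    (hnj : ∀ j, 1 ≤ j → j ≤ g → nj j = (Ms (j - 1)).relIndex (Ms j))
    (hnj2 : ∀ j, 1 ≤ j → j ≤ g → 2 ≤ nj j)
    (γ : ℕ → Fin d → ℚ)
    (hγ1 : γ 1 = lam 1)
    (hγrec : ∀ j, 1 ≤ j → j < g → γ (j + 1) = (nj j : ℚ) • γ j + lam (j + 1) - lam j)
    :
    (∀ j, 2 ≤ j → j ≤ g → ltRho ρ ((nj (j - 1) : ℚ) • γ (j - 1)) (γ j)) ∧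
    (∀ j, 1 ≤ j → j ≤ g → ∀ u : Fin d → ℚ, u ∈ Ms j → qcastR u ∈ dualSet ρ →
      u + (nj j : ℚ) • γ j ∈ GammaSet ρ γ j) := by
  -- basic memberships
  have hlamM : ∀ t, 1 ≤ t → t ≤ g → lam t ∈ Ms t := by
    intro t h1 h2
    rw [hMs t h1 h2]
    exact AddSubgroup.mem_sup_right (AddSubgroup.subset_closure rfl)
  have hMs_mono : ∀ t, 1 ≤ t → t ≤ g → Ms (t - 1) ≤ Ms t := by
    intro t h1 h2
    rw [hMs t h1 h2]
    exact le_sup_left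
  -- γ t ∈ Ms t
  have hγmem : ∀ t, 1 ≤ t → t ≤ g → γ t ∈ Ms t := by
    intro t
    induction t with
    | zero => intro h; omega
    | succ t ih =>
      intro _ h2
      rcases Nat.eq_zero_or_pos t with h0 | hpos
      · subst h0
        rw [hγ1]
        exact hlamM 1 le_rfl h2
      · rw [hγrec t hpos (by omega)]
        have h1 : γ t ∈ Ms (t + 1) := by
          have := hMs_mono (t + 1) (by omega) h2
          simp only [Nat.add_sub_cancel] at this
          exact this (ih hpos (by omega))
        have h2' : lam t ∈ Ms (t + 1) := by
          have := hMs_mono (t + 1) (by omega) h2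
          simp only [Nat.add_sub_cancel] at this
          exact this (hlamM t hpos (by omega))
        have h3 : (nj t : ℚ) • γ t ∈ Ms (t + 1) := by
          rw [Nat.cast_smul_eq_nsmul ℚ]
          exact AddSubgroup.nsmul_mem _ h1 _
        exact AddSubgroup.sub_mem _
          (AddSubgroup.add_mem _ h3 (hlamM (t + 1) (by omega) h2)) h2'
  -- γ t ∈ ρ^∨
  have hγdual : ∀ t, 1 ≤ t → t ≤ g → qcastR (γ t) ∈ dualSet ρ := by
    intro t
    induction t with
    | zero => intro h; omega
    | succ t ih =>
      intro _ h2
      rcases Nat.eq_zero_or_pos t with h0 | hpos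
      · subst h0
        rw [hγ1]
        exact hlam_mem 1 le_rfl h2
      · have heq : γ (t + 1) = (nj t : ℚ) • γ t + (lam (t + 1) - lam t) := by
          rw [hγrec t hpos (by omega)]; ring
        rw [heq]
        exact aux_dq_add (aux_dq_nsmul _ (ih hpos (by omega)))
          (hlam_lt t hpos (by omega)).1
  -- n_t • lam t ∈ Ms (t-1)
  have hnl : ∀ t, 1 ≤ t → t ≤ g → (nj t : ℚ) • lam t ∈ Ms (t - 1) := by
    intro t h1 h2
    have hl : lam t ∈ Ms t := hlamM t h1 h2
    have h := AddSubgroup.nsmul_index_mem ((Ms (t - 1)).addSubgroupOf (Ms t))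
      (⟨lam t, hl⟩ : Ms t)
    rw [AddSubgroup.mem_addSubgroupOf] at h
    rw [Nat.cast_smul_eq_nsmul ℚ, hnj t h1 h2]
    have hidx : (Ms (t - 1)).relIndex (Ms t)
        = ((Ms (t - 1)).addSubgroupOf (Ms t)).index := rfl
    rw [hidx]
    exact_mod_cast h
  -- decomposition in Ms t
  have hdec : ∀ t, 1 ≤ t → t ≤ g → ∀ u ∈ Ms t,
      ∃ v ∈ Ms (t - 1), ∃ k : ℕ, k < nj t ∧ u = v + (k : ℚ) • lam t := by
    intro t h1 h2 u hu
    rw [hMs t h1 h2] at hu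
    obtain ⟨y, hy, z, hz, hyz⟩ := AddSubgroup.mem_sup.1 hu
    obtain ⟨m, hm⟩ := AddSubgroup.mem_closure_singleton.1 hz
    have hn2 := hnj2 t h1 h2
    have hnZ : (0 : ℤ) < (nj t : ℤ) := by exact_mod_cast (by omega : 0 < nj t)
    have hmod0 : 0 ≤ m % (nj t : ℤ) := Int.emod_nonneg m (by omega)
    have hmodlt : m % (nj t : ℤ) < (nj t : ℤ) := Int.emod_lt_of_pos m hnZ
    refine ⟨y + ((m / (nj t : ℤ) : ℤ) : ℚ) • ((nj t : ℚ) • lam t), ?_,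
      (m % (nj t : ℤ)).toNat, ?_, ?_⟩
    · refine AddSubgroup.add_mem _ hy ?_
      rw [Int.cast_smul_eq_zsmul ℚ]
      exact AddSubgroup.zsmul_mem _ (hnl t h1 h2) _
    · omega
    · rw [← hyz, ← hm]
      have hcast : (((m % (nj t : ℤ)).toNat : ℚ)) = ((m % (nj t : ℤ) : ℤ) : ℚ) := by
        exact_mod_cast Int.toNat_of_nonneg hmod0
      rw [hcast]
      have hzs : m • lam t = ((m : ℚ)) • lam t := (Int.cast_smul_eq_zsmul ℚ m _).symm
      rw [hzs]
      have hdm : ((m : ℚ)) = ((m / (nj t : ℤ) : ℤ) : ℚ) * (nj t : ℚ)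
          + ((m % (nj t : ℤ) : ℤ) : ℚ) := by
        have h0 := Int.mul_ediv_add_emod m (nj t : ℤ)
        have h1 := congrArg (fun z : ℤ => (z : ℚ)) h0
        push_cast at h1
        linarith [h1]
      funext i
      simp only [Pi.add_apply, Pi.smul_apply, smul_eq_mul]
      rw [hdm]
      ring
  -- main induction
  have main : ∀ t, 1 ≤ t → t ≤ g → ∀ u ∈ Ms t, qcastR u ∈ dualSet ρ →
      u + (nj t : ℚ) • γ t ∈ GammaSet ρ γ t := by
    intro t
    induction t with
    | zero => intro h; omega
    | succ t ih =>
      intro _ htg u hu hud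
      obtain ⟨v, hv, k, hk, hudec⟩ := hdec (t + 1) (by omega) htg u hu
      simp only [Nat.add_sub_cancel] at hv
      obtain ⟨k', hk'⟩ : ∃ k', nj (t + 1) = k + k' + 1 := ⟨nj (t + 1) - k - 1, by omega⟩
      set w : Fin d → ℚ := u + ((k' + 1 : ℕ) : ℚ) • γ (t + 1) with hw
      have hfin : u + (nj (t + 1) : ℚ) • γ (t + 1) = w + (k : ℚ) • γ (t + 1) := by
        rw [hw]
        funext i
        simp only [Pi.add_apply, Pi.smul_apply, smul_eq_mul]
        rw [hk']
        push_cast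
        ring
      -- w dual
      have hwdual : qcastR w ∈ dualSet ρ := by
        rw [hw]
        exact aux_dq_add hud (aux_dq_nsmul _ (hγdual (t + 1) (by omega) htg))
      -- nj (t+1) • lam (t+1) ∈ Ms t
      have hnl1 : (nj (t + 1) : ℚ) • lam (t + 1) ∈ Ms t := by
        have h' := hnl (t + 1) (by omega) htg
        simp only [Nat.add_sub_cancel] at h'
        exact h'
      have hwmem : w ∈ GammaSet ρ γ t := by
        rcases Nat.eq_zero_or_pos t with h0 | hpos
        · -- base: t = 0
          subst h0
          have hwMs : w ∈ Ms 0 := by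
            have hweq : w = v + (nj 1 : ℚ) • lam 1 := by
              rw [hw, hudec, hγ1]
              funext i
              simp only [Pi.add_apply, Pi.smul_apply, smul_eq_mul]
              rw [hk']
              push_cast
              ring
            rw [hweq]
            exact AddSubgroup.add_mem _ hv hnl1
          rw [hM0] at hwMs
          exact aux_gammaSet_zero hwMs hwdual
        · -- step: t ≥ 1
          have htlt : t < g := by omega
          have hrec := hγrec t hpos htlt
          have hwMs : w ∈ Ms t := by
            have hweq : w = v + (nj (t + 1) : ℚ) • lam (t + 1)
                + ((k' + 1 : ℕ) : ℚ) • ((nj t : ℚ) • γ t)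
                - ((k' + 1 : ℕ) : ℚ) • lam t := by
              rw [hw, hudec, hrec]
              funext i
              simp only [Pi.add_apply, Pi.sub_apply, Pi.smul_apply, smul_eq_mul]
              rw [hk']
              push_cast
              ring
            rw [hweq]
            have hγtM : (nj t : ℚ) • γ t ∈ Ms t := by
              rw [Nat.cast_smul_eq_nsmul ℚ]
              exact AddSubgroup.nsmul_mem _ (hγmem t hpos (by omega)) _
            have h3 : ((k' + 1 : ℕ) : ℚ) • ((nj t : ℚ) • γ t) ∈ Ms t := by
              rw [Nat.cast_smul_eq_nsmul ℚ]
              exact AddSubgroup.nsmul_mem _ hγtM _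
            have h4 : ((k' + 1 : ℕ) : ℚ) • lam t ∈ Ms t := by
              rw [Nat.cast_smul_eq_nsmul ℚ]
              exact AddSubgroup.nsmul_mem _ (hlamM t hpos (by omega)) _
            exact AddSubgroup.sub_mem _
              (AddSubgroup.add_mem _ (AddSubgroup.add_mem _ hv hnl1) h3) h4
          -- apply IH to w' = w - nj t • γ t
          set w' : Fin d → ℚ := u + ((k' : ℕ) : ℚ) • γ (t + 1) + (lam (t + 1) - lam t)
            with hw'
          have hw'eq : w = w' + (nj t : ℚ) • γ t := by
            rw [hw, hw', hrec]
            funext i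
            simp only [Pi.add_apply, Pi.sub_apply, Pi.smul_apply, smul_eq_mul]
            push_cast
            ring
          have hw'Ms : w' ∈ Ms t := by
            have : w' = w - (nj t : ℚ) • γ t := by rw [hw'eq]; ring
            rw [this]
            have hγtM : (nj t : ℚ) • γ t ∈ Ms t := by
              rw [Nat.cast_smul_eq_nsmul ℚ]
              exact AddSubgroup.nsmul_mem _ (hγmem t hpos (by omega)) _
            exact AddSubgroup.sub_mem _ hwMs hγtM
          have hw'dual : qcastR w' ∈ dualSet ρ := by
            rw [hw']
            exact aux_dq_add
              (aux_dq_add hud (aux_dq_nsmul _ (hγdual (t + 1) (by omega) htg)))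
              ((hlam_lt t hpos htlt).1)
          have := ih hpos (by omega) w' hw'Ms hw'dual
          rw [hw'eq]
          exact this
      rw [hfin]
      exact aux_gammaSet_step hwmem
  constructor
  · -- part (i)
    intro j h2 hjg
    obtain ⟨s, rfl⟩ : ∃ s, j = s + 1 := ⟨j - 1, by omega⟩
    simp only [Nat.add_sub_cancel]
    have hrec := hγrec s (by omega) (by omega)
    constructor
    · show qcastR (γ (s + 1) - (nj s : ℚ) • γ s) ∈ dualSet ρ
      have heq : γ (s + 1) - (nj s : ℚ) • γ s = lam (s + 1) - lam s := by
        rw [hrec]; ring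
      rw [heq]
      exact (hlam_lt s (by omega) (by omega)).1
    · intro hcon
      apply (hlam_lt s (by omega) (by omega)).2
      have h2' := hrec
      rw [← hcon] at h2'
      funext i
      have h2i := congrFun h2' i
      simp only [Pi.add_apply, Pi.sub_apply, Pi.smul_apply, smul_eq_mul] at h2i
      linarith
  · exact main
end

section
/- In the setting below, for each j = 1, …, g one has n_jγ_j ∈ Γ_{j-1}, and there is a unique expression n_jγ_j = α^{(j)} + l_1^{(j)}γ_1 + ⋯ + l_{j-1}^{(j)}γ_{j-1} with α^{(j)} ∈ M and 0 ≤ l_i^{(j)} ≤ n_i − 1 for all 1 ≤ i ≤ j−1; moreover α^{(j)} ∈ ρ^∨ ∩ M. -/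
open Finset

section AuxStmt9

open Finset AddSubgroup

lemma relindex_eq_addOrderOf9 {Q : Type*} [AddCommGroup Q] (H : AddSubgroup Q) (x : Q) :
    H.relIndex (H ⊔ AddSubgroup.closure {x})
      = addOrderOf (QuotientAddGroup.mk' H x) := by
  set K : AddSubgroup Q := H ⊔ AddSubgroup.closure {x} with hK
  set f : K →+ Q ⧸ H := (QuotientAddGroup.mk' H).comp K.subtype with hf
  have hker : f.ker = H.addSubgroupOf K := by
    ext k
    simp [hf, AddMonoidHom.mem_ker, AddSubgroup.mem_addSubgroupOf,
      QuotientAddGroup.eq_zero_iff]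
  have hrange : f.range = AddSubgroup.closure {QuotientAddGroup.mk' H x} := by
    have h1 : f.range = K.map (QuotientAddGroup.mk' H) := by
      rw [hf, AddMonoidHom.range_comp, AddSubgroup.range_subtype]
    rw [h1, hK, AddSubgroup.map_sup, AddMonoidHom.map_closure]
    have h2 : H.map (QuotientAddGroup.mk' H) = ⊥ := by
      rw [eq_bot_iff]
      rintro y ⟨z, hz, rfl⟩
      simpa [QuotientAddGroup.eq_zero_iff] using hz
    rw [h2, Set.image_singleton, bot_sup_eq]
  have e1 : (K ⧸ H.addSubgroupOf K) ≃+ f.range := by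
    rw [← hker]; exact QuotientAddGroup.quotientKerEquivRange f
  have : H.relIndex K = Nat.card f.range := by
    rw [AddSubgroup.relIndex, AddSubgroup.index, Nat.card_congr e1.toEquiv]
  rw [this, hrange, ← zmultiples_eq_closure, Nat.card_zmultiples]

lemma smul_mem_iff_dvd9 {Q : Type*} [AddCommGroup Q] (H : AddSubgroup Q) (x : Q) (k : ℤ) :
    k • x ∈ H ↔ ((H.relIndex (H ⊔ AddSubgroup.closure {x}) : ℤ)) ∣ k := by
  rw [relindex_eq_addOrderOf9]
  rw [addOrderOf_dvd_iff_zsmul_eq_zero]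
  rw [← map_zsmul (QuotientAddGroup.mk' H) k x]
  rw [QuotientAddGroup.mk'_apply, QuotientAddGroup.eq_zero_iff]

lemma qcastR_add9 {d : ℕ} (x y : Fin d → ℚ) : qcastR (x + y) = qcastR x + qcastR y := by
  funext i; simp [qcastR]

lemma dual_add9 {d : ℕ} {ρ : Set (Fin d → ℝ)} {x y : Fin d → ℚ}
    (hx : qcastR x ∈ dualSet ρ) (hy : qcastR y ∈ dualSet ρ) :
    qcastR (x + y) ∈ dualSet ρ := by
  intro a ha
  have h1 := hx a ha; have h2 := hy a ha
  have : dotR a (qcastR (x + y)) = dotR a (qcastR x) + dotR a (qcastR y) := by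
    simp [dotR, qcastR, mul_add, Finset.sum_add_distrib]
  rw [this]; positivity

lemma dual_smul9 {d : ℕ} {ρ : Set (Fin d → ℝ)} {x : Fin d → ℚ} (c : ℚ) (hc : 0 ≤ c)
    (hx : qcastR x ∈ dualSet ρ) : qcastR (c • x) ∈ dualSet ρ := by
  intro a ha
  have h1 := hx a ha
  have : dotR a (qcastR (c • x)) = (c : ℝ) * dotR a (qcastR x) := by
    simp [dotR, qcastR, Finset.mul_sum]; ring_nf
    exact Finset.sum_congr rfl fun i _ => by ring
  rw [this]
  have : (0:ℝ) ≤ (c:ℝ) := by exact_mod_cast hc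
  positivity

lemma dual_zero9 {d : ℕ} {ρ : Set (Fin d → ℝ)} : qcastR (0 : Fin d → ℚ) ∈ dualSet ρ := by
  intro a _; simp [dotR, qcastR]

lemma dual_sum9 {d : ℕ} {ρ : Set (Fin d → ℝ)} (s : Finset ℕ) (c : ℕ → ℚ) (v : ℕ → Fin d → ℚ)
    (hc : ∀ i ∈ s, 0 ≤ c i) (hv : ∀ i ∈ s, qcastR (v i) ∈ dualSet ρ) :
    qcastR (∑ i ∈ s, c i • v i) ∈ dualSet ρ := by
  induction s using Finset.cons_induction with
  | empty => simpa using dual_zero9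
  | cons a s ha ih =>
    rw [Finset.sum_cons]
    exact dual_add9 (dual_smul9 _ (hc a (by simp)) (hv a (by simp)))
      (ih (fun i hi => hc i (by simp [hi])) (fun i hi => hv i (by simp [hi])))

lemma castIQ9 {d : ℕ} (α : Fin d → ℤ) : qcastR (intCastHomQ d α) = icastR α := by
  funext i; simp [qcastR, icastR, intCastHomQ]

lemma qsmul_nat9 {d : ℕ} (n : ℕ) (x : Fin d → ℚ) : ((n:ℚ)) • x = (n:ℤ) • x := by
  rw [← Int.cast_smul_eq_zsmul ℚ]; norm_num

lemma qsmul_int9 {d : ℕ} (n : ℤ) (x : Fin d → ℚ) : ((n:ℚ)) • x = n • x :=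
  Int.cast_smul_eq_zsmul ℚ n x

end AuxStmt9

/-- `n_jγ_j ∈ Γ_{j-1}`, with a unique expression `n_jγ_j = α + Σ l_iγ_i` with `α ∈ M`, `0 ≤ l_i ≤ n_i − 1`; moreover `α ∈ ρ^∨ ∩ M`. -/
theorem stmt_9
    (d g : ℕ) (hd : 1 ≤ d) (hg : 1 ≤ g)
    (ρ : Set (Fin d → ℝ))
    (hρ : IsRatPolyCone ρ)
    (hρsc : ∀ x ∈ ρ, -x ∈ ρ → x = 0)
    (hρdim : Submodule.span ℝ ρ = ⊤)
    (hdsc : ∀ u ∈ dualSet ρ, -u ∈ dualSet ρ → u = 0)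
    (hddim : Submodule.span ℝ (dualSet ρ) = ⊤)
    (lam : ℕ → Fin d → ℚ)
    (hlam_mem : ∀ j, 1 ≤ j → j ≤ g → qcastR (lam j) ∈ dualSet ρ)
    (hlam_lt : ∀ j, 1 ≤ j → j < g → ltRho ρ (lam j) (lam (j + 1)))
    (Ms : ℕ → AddSubgroup (Fin d → ℚ))
    (hM0 : Ms 0 = zLatQ d)
    (hMs : ∀ j, 1 ≤ j → j ≤ g → Ms j = Ms (j - 1) ⊔ AddSubgroup.closure {lam j})
    (hlam_not : ∀ j, 1 ≤ j → j ≤ g → lam j ∉ Ms (j - 1))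
    (nj : ℕ → ℕ)
    (hnj : ∀ j, 1 ≤ j → j ≤ g → nj j = (Ms (j - 1)).relIndex (Ms j))
    (hnj2 : ∀ j, 1 ≤ j → j ≤ g → 2 ≤ nj j)
    (γ : ℕ → Fin d → ℚ)
    (hγ1 : γ 1 = lam 1)
    (hγrec : ∀ j, 1 ≤ j → j < g → γ (j + 1) = (nj j : ℚ) • γ j + lam (j + 1) - lam j)
    :
    ∀ j, 1 ≤ j → j ≤ g →
      ((nj j : ℚ) • γ j ∈ GammaSet ρ γ (j - 1)) ∧
      (∃ (α : Fin d → ℤ) (l : ℕ → ℕ),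
        icastR α ∈ dualSet ρ ∧
        (∀ i, 1 ≤ i → i ≤ j - 1 → l i ≤ nj i - 1) ∧
        (nj j : ℚ) • γ j
          = intCastHomQ d α + ∑ i ∈ Icc 1 (j - 1), (l i : ℚ) • γ i ∧
        (∀ (α' : Fin d → ℤ) (l' : ℕ → ℕ),
          (∀ i, 1 ≤ i → i ≤ j - 1 → l' i ≤ nj i - 1) →
          (nj j : ℚ) • γ j
            = intCastHomQ d α' + ∑ i ∈ Icc 1 (j - 1), (l' i : ℚ) • γ i →
          α' = α ∧ ∀ i, 1 ≤ i → i ≤ j - 1 → l' i = l i)) := by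
  -- basic facts about the subgroup chain
  have hMle : ∀ j, 1 ≤ j → j ≤ g → Ms (j - 1) ≤ Ms j := by
    intro j h1 h2
    rw [hMs j h1 h2]; exact le_sup_left
  have mono : ∀ i j, i ≤ j → j ≤ g → Ms i ≤ Ms j := by
    intro i j hij hjg
    induction j with
    | zero => have : i = 0 := by omega
              simp [this]
    | succ k ih =>
      rcases Nat.lt_or_ge i (k + 1) with h | h
      · have h1 := ih (by omega) (by omega)
        have h2 := hMle (k + 1) (by omega) hjg
        simpa using h1.trans (by simpa using h2)
      · have : i = k + 1 := by omega
        simp [this]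
  have hlam_in : ∀ j, 1 ≤ j → j ≤ g → lam j ∈ Ms j := by
    intro j h1 h2
    rw [hMs j h1 h2]
    exact AddSubgroup.mem_sup_right (AddSubgroup.subset_closure rfl)
  have ordlam : ∀ j, 1 ≤ j → j ≤ g → ∀ k : ℤ, k • lam j ∈ Ms (j - 1) ↔ (nj j : ℤ) ∣ k := by
    intro j h1 h2 k
    rw [smul_mem_iff_dvd9 (Ms (j - 1)) (lam j) k, ← hMs j h1 h2, ← hnj j h1 h2]
  -- γ_j ≡ λ_j mod M_{j-1}
  have hglam : ∀ j, 1 ≤ j → j ≤ g → γ j - lam j ∈ Ms (j - 1) := by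
    intro j h1
    induction j, h1 using Nat.le_induction with
    | base => intro _; rw [hγ1]; simpa using AddSubgroup.zero_mem _
    | succ j hj ih =>
      intro hj1g
      have hjg : j ≤ g := by omega
      have hjlt : j < g := by omega
      have ihm := ih hjg
      have h1 : (nj j : ℤ) • lam j ∈ Ms (j - 1) := (ordlam j hj hjg _).mpr dvd_rfl
      have h2 : (nj j : ℤ) • (γ j - lam j) ∈ Ms (j - 1) := AddSubgroup.zsmul_mem _ ihm _
      have h3 : (nj j : ℤ) • γ j ∈ Ms (j - 1) := by
        have he : (nj j : ℤ) • γ j = (nj j : ℤ) • lam j + (nj j : ℤ) • (γ j - lam j) := by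
          rw [← smul_add]; congr 1; abel
        rw [he]; exact AddSubgroup.add_mem _ h1 h2
      have h4 : (nj j : ℤ) • γ j ∈ Ms j := hMle j hj hjg h3
      have h5 : γ (j + 1) - lam (j + 1) = (nj j : ℤ) • γ j - lam j := by
        rw [hγrec j hj hjlt, ← qsmul_nat9]; abel
      rw [show j + 1 - 1 = j by omega, h5]
      exact AddSubgroup.sub_mem _ h4 (hlam_in j hj hjg)
  have ordγ : ∀ j, 1 ≤ j → j ≤ g → ∀ k : ℤ, k • γ j ∈ Ms (j - 1) ↔ (nj j : ℤ) ∣ k := by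
    intro j h1 h2 k
    have hd : k • (γ j - lam j) ∈ Ms (j - 1) := AddSubgroup.zsmul_mem _ (hglam j h1 h2) _
    have he : k • γ j = k • lam j + k • (γ j - lam j) := by
      rw [← smul_add]; congr 1; abel
    rw [he]
    constructor
    · intro h
      exact (ordlam j h1 h2 k).mp (by simpa using AddSubgroup.sub_mem _ h hd)
    · intro h
      exact AddSubgroup.add_mem _ ((ordlam j h1 h2 k).mpr h) hd
  have γmem : ∀ j, 1 ≤ j → j ≤ g → γ j ∈ Ms j := by
    intro j h1 h2
    have he : γ j = (γ j - lam j) + lam j := by abel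
    rw [he]
    exact AddSubgroup.add_mem _ (hMle j h1 h2 (hglam j h1 h2)) (hlam_in j h1 h2)
  have njγmem : ∀ j, 1 ≤ j → j ≤ g → (nj j : ℤ) • γ j ∈ Ms (j - 1) :=
    fun j h1 h2 => (ordγ j h1 h2 _).mpr dvd_rfl
  -- cone side
  have γdual : ∀ j, 1 ≤ j → j ≤ g → qcastR (γ j) ∈ dualSet ρ := by
    intro j h1
    induction j, h1 using Nat.le_induction with
    | base => intro _; rw [hγ1]; simpa [qcastR] using hlam_mem 1 le_rfl hg
    | succ j hj ih =>
      intro hj1g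
      have hjlt : j < g := by omega
      have h1 : γ (j + 1) = (nj j : ℚ) • γ j + (lam (j + 1) - lam j) := by
        rw [hγrec j hj hjlt]; abel
      rw [h1]
      exact dual_add9 (dual_smul9 _ (by positivity) (ih (by omega)))
        ((hlam_lt j hj hjlt).1)
  set S : ℕ → (Fin d → ℚ) := fun k => ∑ i ∈ Icc 1 k, ((nj i : ℚ) - 1) • γ i with hSdef
  have hS0 : S 0 = 0 := by simp [hSdef]
  have hSstep : ∀ j, 1 ≤ j → S j = S (j - 1) + ((nj j : ℚ) - 1) • γ j := by
    intro j h1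
    match j, h1 with
    | (k+1), _ =>
      simp only [hSdef, Nat.add_sub_cancel]
      exact Finset.sum_Icc_succ_top (by omega) _
  have L' : ∀ j, 1 ≤ j → j ≤ g → qcastR (γ j - S (j - 1)) ∈ dualSet ρ := by
    intro j h1
    induction j, h1 using Nat.le_induction with
    | base => intro _; simp only [Nat.sub_self, hS0, sub_zero]; exact γdual 1 le_rfl hg
    | succ j hj ih =>
      intro hj1g
      have hjlt : j < g := by omega
      have h1 : γ (j + 1) - S (j + 1 - 1) = (γ j - S (j - 1)) + (lam (j + 1) - lam j) := by
        rw [show j + 1 - 1 = j by omega, hγrec j hj hjlt, hSstep j hj]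
        module
      rw [h1]
      exact dual_add9 (ih (by omega)) ((hlam_lt j hj hjlt).1)
  -- existence of decomposition
  have decomp : ∀ k, k ≤ g → ∀ m, m ∈ Ms k → ∃ (α : Fin d → ℤ) (l : ℕ → ℕ),
      (∀ i, 1 ≤ i → i ≤ k → l i ≤ nj i - 1) ∧
      m = intCastHomQ d α + ∑ i ∈ Icc 1 k, (l i : ℚ) • γ i := by
    intro k
    induction k with
    | zero =>
      intro _ m hm
      rw [hM0] at hm
      obtain ⟨α, rfl⟩ := hm
      exact ⟨α, fun _ => 0, fun i hi1 hi2 => by omega, by simp⟩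
    | succ k ih =>
      intro hkg m hm
      have hMsk : Ms (k + 1) = Ms k ⊔ AddSubgroup.closure {lam (k + 1)} := by
        have := hMs (k + 1) (by omega) hkg
        simpa using this
      rw [hMsk, AddSubgroup.mem_sup] at hm
      obtain ⟨h, hh, c, hc, rfl⟩ := hm
      rw [← AddSubgroup.zmultiples_eq_closure, AddSubgroup.mem_zmultiples_iff] at hc
      obtain ⟨z, rfl⟩ := hc
      set n : ℤ := (nj (k + 1) : ℤ) with hn
      have hn2 : 2 ≤ nj (k + 1) := hnj2 (k + 1) (by omega) hkg
      have hn0 : 0 < n := by omega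
      set q : ℤ := z / n with hq
      set r : ℤ := z % n with hr
      have hr0 : 0 ≤ r := Int.emod_nonneg z (by omega)
      have hrn : r < n := Int.emod_lt_of_pos z hn0
      have hz : n * q + r = z := Int.mul_ediv_add_emod z n
      set δ : Fin d → ℚ := γ (k + 1) - lam (k + 1) with hδ
      have hδm : δ ∈ Ms k := by
        have := hglam (k + 1) (by omega) hkg
        simpa using this
      have key : h + z • lam (k + 1) = (h - z • δ + q • ((n : ℤ) • γ (k + 1))) + r • γ (k + 1) := by
        have e1 : lam (k + 1) = γ (k + 1) - δ := by rw [hδ]; abel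
        rw [e1, smul_sub, smul_smul, mul_comm q n, ← hz, add_smul]
        abel
      have hmem : h - z • δ + q • ((n : ℤ) • γ (k + 1)) ∈ Ms k := by
        refine AddSubgroup.add_mem _ (AddSubgroup.sub_mem _ hh (AddSubgroup.zsmul_mem _ hδm _)) ?_
        refine AddSubgroup.zsmul_mem _ ?_ _
        have := njγmem (k + 1) (by omega) hkg
        simpa [hn] using this
      obtain ⟨α, l, hlb, hle⟩ := ih (by omega) _ hmem
      refine ⟨α, Function.update l (k + 1) r.toNat, ?_, ?_⟩
      · intro i hi1 hi2
        rcases Nat.lt_or_ge i (k + 1) with hik | hik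
        · rw [Function.update_of_ne (by omega)]
          exact hlb i hi1 (by omega)
        · have : i = k + 1 := by omega
          subst this
          rw [Function.update_self]
          omega
      · rw [key, hle]
        rw [Finset.sum_Icc_succ_top (by omega : 1 ≤ k + 1)]
        rw [Function.update_self]
        have hsum : ∑ i ∈ Icc 1 k, ((Function.update l (k + 1) r.toNat i : ℚ)) • γ i
            = ∑ i ∈ Icc 1 k, ((l i : ℚ)) • γ i := by
          apply Finset.sum_congr rfl
          intro i hi
          simp only [Finset.mem_Icc] at hi
          rw [Function.update_of_ne (by omega)]
        rw [hsum]
        have hrq : ((r.toNat : ℕ) : ℚ) • γ (k + 1) = r • γ (k + 1) := by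
          rw [qsmul_nat9]
          congr 1
          exact Int.toNat_of_nonneg hr0
        rw [hrq]
        abel
  -- uniqueness of decomposition
  have uniq : ∀ k, k ≤ g → ∀ (α α' : Fin d → ℤ) (l l' : ℕ → ℕ),
      (∀ i, 1 ≤ i → i ≤ k → l i ≤ nj i - 1) →
      (∀ i, 1 ≤ i → i ≤ k → l' i ≤ nj i - 1) →
      intCastHomQ d α + ∑ i ∈ Icc 1 k, (l i : ℚ) • γ i
        = intCastHomQ d α' + ∑ i ∈ Icc 1 k, (l' i : ℚ) • γ i →
      α = α' ∧ ∀ i, 1 ≤ i → i ≤ k → l i = l' i := by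
    intro k
    induction k with
    | zero =>
      intro _ α α' l l' hba hbb heq
      simp only [show Icc 1 0 = (∅ : Finset ℕ) by rfl, Finset.sum_empty, add_zero] at heq
      constructor
      · funext i
        have := congrFun heq i
        simpa [intCastHomQ] using this
      · intro i hi1 hi2; omega
    | succ k ih =>
      intro hkg α α' l l' hb hb' heq
      rw [Finset.sum_Icc_succ_top (by omega : 1 ≤ k + 1),
          Finset.sum_Icc_succ_top (by omega : 1 ≤ k + 1)] at heq
      set X : Fin d → ℚ := intCastHomQ d α + ∑ i ∈ Icc 1 k, (l i : ℚ) • γ i with hX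
      set Y : Fin d → ℚ := intCastHomQ d α' + ∑ i ∈ Icc 1 k, (l' i : ℚ) • γ i with hY
      have heq2 : X + (l (k + 1) : ℚ) • γ (k + 1) = Y + (l' (k + 1) : ℚ) • γ (k + 1) := by
        rw [hX, hY]
        simp only [← add_assoc] at heq
        exact heq
      have hXm : X ∈ Ms k := by
        refine AddSubgroup.add_mem _ ?_ ?_
        · apply mono 0 k (by omega) (by omega)
          rw [hM0]; exact ⟨α, rfl⟩
        · apply AddSubgroup.sum_mem
          intro i hi
          simp only [Finset.mem_Icc] at hi
          rw [qsmul_nat9]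
          exact AddSubgroup.zsmul_mem _ (mono i k hi.2 (by omega) (γmem i hi.1 (by omega))) _
      have hYm : Y ∈ Ms k := by
        refine AddSubgroup.add_mem _ ?_ ?_
        · apply mono 0 k (by omega) (by omega)
          rw [hM0]; exact ⟨α', rfl⟩
        · apply AddSubgroup.sum_mem
          intro i hi
          simp only [Finset.mem_Icc] at hi
          rw [qsmul_nat9]
          exact AddSubgroup.zsmul_mem _ (mono i k hi.2 (by omega) (γmem i hi.1 (by omega))) _
      have hdiff : ((l (k + 1) : ℤ) - (l' (k + 1) : ℤ)) • γ (k + 1) = Y - X := by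
        have e : ((l (k + 1) : ℚ) - (l' (k + 1) : ℚ)) • γ (k + 1) = Y - X := by
          linear_combination (norm := module) heq2
        rw [← qsmul_int9]
        push_cast
        exact e
      have hdm : ((l (k + 1) : ℤ) - (l' (k + 1) : ℤ)) • γ (k + 1) ∈ Ms k := by
        rw [hdiff]; exact AddSubgroup.sub_mem _ hYm hXm
      have hdvd : (nj (k + 1) : ℤ) ∣ ((l (k + 1) : ℤ) - (l' (k + 1) : ℤ)) := by
        exact (ordγ (k + 1) (by omega) hkg _).mp (by simpa using hdm)
      have hn2 : 2 ≤ nj (k + 1) := hnj2 (k + 1) (by omega) hkg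
      have hbk := hb (k + 1) (by omega) le_rfl
      have hbk' := hb' (k + 1) (by omega) le_rfl
      have heqk : l (k + 1) = l' (k + 1) := by
        have h0 : ((l (k + 1) : ℤ) - (l' (k + 1) : ℤ)) = 0 := by
          refine Int.eq_zero_of_abs_lt_dvd hdvd ?_
          rw [abs_lt]
          constructor <;> push_cast <;> omega
        omega
      have hXY : X = Y := by
        have hc : X + (l (k + 1) : ℚ) • γ (k + 1) = Y + (l (k + 1) : ℚ) • γ (k + 1) := by
          rw [heq2, heqk]
        exact add_right_cancel hc
      obtain ⟨hαα, hll⟩ := ih (by omega) α α' l l'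
        (fun i hi1 hi2 => hb i hi1 (by omega)) (fun i hi1 hi2 => hb' i hi1 (by omega)) hXY
      refine ⟨hαα, ?_⟩
      intro i hi1 hi2
      rcases Nat.lt_or_ge i (k + 1) with hik | hik
      · exact hll i hi1 (by omega)
      · have : i = k + 1 := by omega
        subst this; exact heqk
  -- main
  intro j h1 hjg
  have hj1 : j - 1 ≤ g := by omega
  have hmM : (nj j : ℚ) • γ j ∈ Ms (j - 1) := by
    rw [qsmul_nat9]; exact njγmem j h1 hjg
  obtain ⟨α, l, hlb, heq⟩ := decomp (j - 1) hj1 _ hmM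
  have hαdual : icastR α ∈ dualSet ρ := by
    have hα : intCastHomQ d α = (γ j - S (j - 1)) + ((nj j : ℚ) - 1) • γ j
        + ∑ i ∈ Icc 1 (j - 1), (((nj i : ℚ) - 1) - (l i : ℚ)) • γ i := by
      have hsum : ∑ i ∈ Icc 1 (j - 1), (((nj i : ℚ) - 1) - (l i : ℚ)) • γ i
          = S (j - 1) - ∑ i ∈ Icc 1 (j - 1), (l i : ℚ) • γ i := by
        rw [hSdef, ← Finset.sum_sub_distrib]
        apply Finset.sum_congr rfl
        intro i _
        rw [← sub_smul]
      rw [hsum]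
      have e : intCastHomQ d α = (nj j : ℚ) • γ j - ∑ i ∈ Icc 1 (j - 1), (l i : ℚ) • γ i := by
        rw [heq]; abel
      rw [e]
      module
    rw [← castIQ9, hα]
    refine dual_add9 (dual_add9 (L' j h1 hjg) (dual_smul9 _ ?_ (γdual j h1 hjg))) ?_
    · have h2' := hnj2 j h1 hjg
      have : (2:ℚ) ≤ (nj j : ℚ) := by exact_mod_cast h2'
      linarith
    · apply dual_sum9
      · intro i hi
        simp only [Finset.mem_Icc] at hi
        have hbi := hlb i hi.1 hi.2
        have hn2 : 2 ≤ nj i := hnj2 i hi.1 (by omega)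
        have hcast : (l i : ℚ) ≤ (nj i : ℚ) - 1 := by
          have h3 : l i + 1 ≤ nj i := by omega
          have h4 := (Nat.cast_le (α := ℚ)).mpr h3
          push_cast at h4
          linarith
        linarith
      · intro i hi
        simp only [Finset.mem_Icc] at hi
        exact γdual i hi.1 (by omega)
  refine ⟨⟨α, l, hαdual, heq⟩, α, l, hαdual, hlb, heq, ?_⟩
  intro α' l' hb' heq'
  exact uniq (j - 1) hj1 α' α l' l hb' hlb (heq'.symm.trans heq)
end

section
/- In the setting below, let α^{(j)} ∈ ρ^∨ ∩ M and 0 ≤ l_i^{(j)} ≤ n_i − 1 be determined by the unique relations n_jγ_j = α^{(j)} + Σ_{i=1}^{j-1} l_i^{(j)}γ_i. Let S := (ρ^∨ ∩ M) × ℕ^g (an additive monoid) and let φ : S → M_g be the monoid homomorphism (α, v) ↦ α + v_1γ_1 + ⋯ + v_gγ_g, whose image is Γ := Γ_g. Then the kernel of the induced surjective ℂ-algebra homomorphism of monoid algebras ℂ[S] → ℂ[Γ] is generated as an ideal by the g binomials h_j := U_j^{n_j} − X^{α^{(j)}} U_1^{l_1^{(j)}} ⋯ U_{j-1}^{l_{j-1}^{(j)}}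 (j = 1, …, g), where X^α U^v denotes the basis element of ℂ[S] corresponding to (α, v) ∈ S. -/
set_option maxHeartbeats 1000000


open Finset

/-- The additive monoid `ρ^∨ ∩ M` of lattice points of the dual cone. -/
def Mmon {d : ℕ} (ρ : Set (Fin d → ℝ)) : AddSubmonoid (Fin d → ℤ) where
  carrier := {x | icastR x ∈ dualSet ρ}
  zero_mem' := by
    intro a _
    simp [icastR, dotR]
  add_mem' := by
    intro x y hx hy a ha
    have h1 := hx a ha
    have h2 := hy a ha
    have heq : dotR a (icastR (x + y)) = dotR a (icastR x) + dotR a (icastR y) := by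
      simp only [dotR, icastR, Pi.add_apply, Int.cast_add, mul_add, Finset.sum_add_distrib]
    change 0 ≤ dotR a (icastR (x + y))
    rw [heq]
    positivity

/-- The monoid homomorphism `φ : S = (ρ^∨ ∩ M) × ℕ^g → M_ℚ`, `(α, v) ↦ α + v₁γ₁ + ⋯ + v_gγ_g`. -/
noncomputable def phiS (d g : ℕ) (ρ : Set (Fin d → ℝ)) (γ : ℕ → Fin d → ℚ) :
    (↥(Mmon ρ) × (Fin g → ℕ)) →+ (Fin d → ℚ) where
  toFun p := intCastHomQ d (p.1 : Fin d → ℤ) + ∑ k : Fin g, (p.2 k : ℚ) • γ ((k : ℕ) + 1)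
  map_zero' := by simp
  map_add' p q := by
    simp only [Prod.fst_add, Prod.snd_add, AddSubmonoid.coe_add, map_add, Pi.add_apply,
      Nat.cast_add, add_smul, Finset.sum_add_distrib]
    abel


lemma ker_mapDomain_le {S T : Type*} [AddCommMonoid S] [AddCommMonoid T]
    (f : S →+ T) (σ : T → S)
    (I : Ideal (AddMonoidAlgebra ℂ S))
    (hI : ∀ a : S, (AddMonoidAlgebra.single a 1 - AddMonoidAlgebra.single (σ (f a)) 1 : AddMonoidAlgebra ℂ S) ∈ I) :
    RingHom.ker (AddMonoidAlgebra.mapDomainAlgHom ℂ ℂ f) ≤ I := by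
  intro x hx
  have hx0 : Finsupp.mapDomain f x.coeff = 0 := congrArg AddMonoidAlgebra.coeff (RingHom.mem_ker.mp hx)
  have h2 : Finsupp.mapDomain (σ ∘ f) x.coeff = 0 := by
    rw [Finsupp.mapDomain_comp, hx0, Finsupp.mapDomain_zero]
  have e1 : x.coeff = ∑ a ∈ x.coeff.support, Finsupp.single a (x.coeff a) := by
    conv_lhs => rw [← Finsupp.sum_single x.coeff]
    rfl
  have e2 : Finsupp.mapDomain (σ ∘ f) x.coeff = ∑ a ∈ x.coeff.support, Finsupp.single (σ (f a)) (x.coeff a) := by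
    rw [Finsupp.mapDomain]; rfl
  have hxrep : x = ∑ a ∈ x.coeff.support,
      (x.coeff a) • ((AddMonoidAlgebra.single a 1 - AddMonoidAlgebra.single (σ (f a)) 1 : AddMonoidAlgebra ℂ S)) := by
    apply AddMonoidAlgebra.coeff_injective
    have : ∀ a ∈ x.coeff.support, ((x.coeff a) • ((AddMonoidAlgebra.single a 1 - AddMonoidAlgebra.single (σ (f a)) 1 : AddMonoidAlgebra ℂ S))).coeff
        = Finsupp.single a (x.coeff a) - Finsupp.single (σ (f a)) (x.coeff a) := by
      intro a _
      rw [AddMonoidAlgebra.coeff_smul, AddMonoidAlgebra.coeff_sub, AddMonoidAlgebra.coeff_single,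
        AddMonoidAlgebra.coeff_single, smul_sub, Finsupp.smul_single', Finsupp.smul_single']; simp
    rw [AddMonoidAlgebra.coeff_sum, Finset.sum_congr rfl this, Finset.sum_sub_distrib, ← e1, ← e2, h2, sub_zero]
  rw [hxrep]
  exact Ideal.sum_mem I fun a _ => by
    rw [Algebra.smul_def]; exact Ideal.mul_mem_left I _ (hI a)


lemma zsmul_mem_iff_dvd {G : Type*} [AddCommGroup G] (H K : AddSubgroup G) (x : G)
    (hK : K = H ⊔ AddSubgroup.closure {x}) (n : ℕ) (hn : H.relIndex K = n) (hn0 : n ≠ 0) :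
    ∀ k : ℤ, k • x ∈ H ↔ (n : ℤ) ∣ k := by
  have hHK : H ≤ K := hK ▸ le_sup_left
  have hxK : x ∈ K := hK ▸ (le_sup_right (a := H))
    (AddSubgroup.mem_closure_singleton.mpr ⟨1, one_zsmul x⟩)
  set H' := H.addSubgroupOf K with hH'
  have hcard : Nat.card (K ⧸ H') = n := hn
  have hfin : Finite (K ⧸ H') := Nat.finite_of_card_ne_zero (hcard ▸ hn0)
  set q : K := ⟨x, hxK⟩ with hq
  set qq : K ⧸ H' := QuotientAddGroup.mk q with hqq
  have hsurj : ∀ z : K ⧸ H', z ∈ AddSubgroup.zmultiples qq := by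
    intro z
    induction z using QuotientAddGroup.induction_on with
    | H y =>
      have hy : (y : G) ∈ H ⊔ AddSubgroup.closure {x} := hK ▸ y.2
      obtain ⟨h, hh, z, hz, hsum⟩ := AddSubgroup.mem_sup.mp hy
      obtain ⟨k, hk⟩ := AddSubgroup.mem_closure_singleton.mp hz
      refine ⟨k, ?_⟩
      have : (k • q : K) = y - ⟨h, hHK hh⟩ := by
        ext
        push_cast [hq]
        rw [hk, ← hsum]
        abel
      simp only [hqq, ← QuotientAddGroup.mk_zsmul]
      rw [this]
      rw [QuotientAddGroup.mk_sub]
      have : QuotientAddGroup.mk (⟨h, hHK hh⟩ : K) = (0 : K ⧸ H') := by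
        rw [QuotientAddGroup.eq_zero_iff]
        exact hh
      rw [this, sub_zero]
  have htop : AddSubgroup.zmultiples qq = ⊤ := by
    ext z; simpa using hsurj z
  have horder : addOrderOf qq = n := by
    rw [← Nat.card_zmultiples qq, htop, ← hcard]
    exact Nat.card_congr (AddSubgroup.topEquiv.toEquiv)
  intro k
  have h1 : k • x ∈ H ↔ k • qq = 0 := by
    rw [hqq, ← QuotientAddGroup.mk_zsmul, QuotientAddGroup.eq_zero_iff]
    rw [AddSubgroup.mem_addSubgroupOf]
    norm_cast
  rw [h1, ← horder, ← addOrderOf_dvd_iff_zsmul_eq_zero]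


lemma sum_reindexAux {M : Type*} [AddCommMonoid M] (g : ℕ) (F : ℕ → M) :
    ∑ k : Fin g, F ((k : ℕ) + 1) = ∑ i ∈ Finset.Icc 1 g, F i := by
  rw [Fin.sum_univ_eq_sum_range (fun k => F (k + 1)) g,
    show Finset.Icc 1 g = Finset.Ico 1 (g + 1) by rw [Finset.Ico_add_one_right_eq_Icc],
    Finset.sum_Ico_eq_sum_range]
  simp [Nat.add_comm]

def vextD (g : ℕ) (v : Fin g → ℕ) : ℕ → ℤ :=
  fun i => if h : 1 ≤ i ∧ i ≤ g then (v ⟨i - 1, by omega⟩ : ℤ) else 0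

lemma vextD_succ (g : ℕ) (v : Fin g → ℕ) (k : Fin g) :
    vextD g v ((k : ℕ) + 1) = (v k : ℤ) := by
  have h : 1 ≤ (k : ℕ) + 1 ∧ (k : ℕ) + 1 ≤ g := ⟨by omega, k.2⟩
  simp only [vextD, dif_pos h]
  congr 1

def Pw (nj : ℕ → ℕ) : ℕ → ℕ
  | 0 => 1
  | k + 1 => Pw nj k * nj (k + 1)


/-- The kernel of the canonical surjection `ℂ[S] → ℂ[Γ]` is generated by the `g` binomials `U_j^{n_j} − X^{α⁽ʲ⁾}U₁^{l₁⁽ʲ⁾}⋯U_{j-1}^{l_{j-1}⁽ʲ⁾}`. -/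
theorem stmt_12
    (d g : ℕ) (hd : 1 ≤ d) (hg : 1 ≤ g)
    (ρ : Set (Fin d → ℝ))
    (hρ : IsRatPolyCone ρ)
    (hρsc : ∀ x ∈ ρ, -x ∈ ρ → x = 0)
    (hρdim : Submodule.span ℝ ρ = ⊤)
    (hdsc : ∀ u ∈ dualSet ρ, -u ∈ dualSet ρ → u = 0)
    (hddim : Submodule.span ℝ (dualSet ρ) = ⊤)
    (lam : ℕ → Fin d → ℚ)
    (hlam_mem : ∀ j, 1 ≤ j → j ≤ g → qcastR (lam j) ∈ dualSet ρ)
    (hlam_lt : ∀ j, 1 ≤ j → j < g → ltRho ρ (lam j) (lam (j + 1)))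
    (Ms : ℕ → AddSubgroup (Fin d → ℚ))
    (hM0 : Ms 0 = zLatQ d)
    (hMs : ∀ j, 1 ≤ j → j ≤ g → Ms j = Ms (j - 1) ⊔ AddSubgroup.closure {lam j})
    (hlam_not : ∀ j, 1 ≤ j → j ≤ g → lam j ∉ Ms (j - 1))
    (nj : ℕ → ℕ)
    (hnj : ∀ j, 1 ≤ j → j ≤ g → nj j = (Ms (j - 1)).relIndex (Ms j))
    (hnj2 : ∀ j, 1 ≤ j → j ≤ g → 2 ≤ nj j)
    (γ : ℕ → Fin d → ℚ)
    (hγ1 : γ 1 = lam 1)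
    (hγrec : ∀ j, 1 ≤ j → j < g → γ (j + 1) = (nj j : ℚ) • γ j + lam (j + 1) - lam j)
    (alph : ℕ → Fin d → ℤ)
    (halph : ∀ j, icastR (alph j) ∈ dualSet ρ)
    (lc : ℕ → ℕ → ℕ)
    (hlc_bound : ∀ j i, 1 ≤ j → j ≤ g → 1 ≤ i → i ≤ j - 1 → lc j i ≤ nj i - 1)
    (hlc_zero : ∀ j i, i = 0 ∨ j ≤ i → lc j i = 0)
    (hrel : ∀ j, 1 ≤ j → j ≤ g →
      (nj j : ℚ) • γ j
        = intCastHomQ d (alph j) + ∑ i ∈ Icc 1 (j - 1), (lc j i : ℚ) • γ i) :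
    RingHom.ker (AddMonoidAlgebra.mapDomainAlgHom ℂ ℂ (AddMonoidHom.mrangeRestrict (phiS d g ρ γ)))
      = Ideal.span (α := AddMonoidAlgebra ℂ (↥(Mmon ρ) × (Fin g → ℕ)))
        (Set.range fun j : Fin g =>
          ((AddMonoidAlgebra.single ((0, Pi.single j (nj ((j : ℕ) + 1)))
              : ↥(Mmon ρ) × (Fin g → ℕ)) (1 : ℂ))
          - (AddMonoidAlgebra.single ((⟨alph ((j : ℕ) + 1), halph ((j : ℕ) + 1)⟩,
              fun i : Fin g => lc ((j : ℕ) + 1) ((i : ℕ) + 1))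
              : ↥(Mmon ρ) × (Fin g → ℕ)) (1 : ℂ))
            : AddMonoidAlgebra ℂ (↥(Mmon ρ) × (Fin g → ℕ)))) := by
  classical
  set φ := phiS d g ρ γ with hφdef
  set I := Ideal.span (α := AddMonoidAlgebra ℂ (↥(Mmon ρ) × (Fin g → ℕ)))
        (Set.range fun j : Fin g =>
          ((AddMonoidAlgebra.single ((0, Pi.single j (nj ((j : ℕ) + 1)))
              : ↥(Mmon ρ) × (Fin g → ℕ)) (1 : ℂ))
          - (AddMonoidAlgebra.single ((⟨alph ((j : ℕ) + 1), halph ((j : ℕ) + 1)⟩,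
              fun i : Fin g => lc ((j : ℕ) + 1) ((i : ℕ) + 1))
              : ↥(Mmon ρ) × (Fin g → ℕ)) (1 : ℂ))
            : AddMonoidAlgebra ℂ (↥(Mmon ρ) × (Fin g → ℕ)))) with hIdef
  have hφ_apply : ∀ p : (↥(Mmon ρ) × (Fin g → ℕ)),
      φ p = intCastHomQ d (p.1 : Fin d → ℤ) + ∑ k : Fin g, ((p.2 k : ℚ)) • γ ((k : ℕ) + 1) :=
    fun p => rfl
  -- Monotonicity of the chain of lattices
  have hMsMono : ∀ i j : ℕ, i ≤ j → j ≤ g → Ms i ≤ Ms j := by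
    intro i j hij hjg
    induction j with
    | zero => have : i = 0 := by omega
              rw [this]
    | succ j ihj =>
      rcases Nat.lt_or_ge i (j + 1) with h | h
      · refine le_trans (ihj (by omega) (by omega)) ?_
        have := hMs (j + 1) (by omega) hjg
        rw [this]
        exact le_sup_left
      · have : i = j + 1 := by omega
        rw [this]
  have hMQ : ∀ a : Fin d → ℤ, intCastHomQ d a ∈ Ms 0 := by
    intro a; rw [hM0]; exact ⟨a, rfl⟩
  have hsmul_nat : ∀ (m : ℕ) (x : Fin d → ℚ) (A : AddSubgroup (Fin d → ℚ)),
      x ∈ A → (m : ℚ) • x ∈ A := by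
    intro m x A hx
    rw [Nat.cast_smul_eq_nsmul]
    exact AddSubgroup.nsmul_mem A hx m
  -- γ j ∈ Ms j, and γ j ≡ λ j mod Ms (j-1)
  have hγkey : ∀ j, 1 ≤ j → j ≤ g → (γ j - lam j ∈ Ms (j - 1) ∧ γ j ∈ Ms j) := by
    intro j
    induction j using Nat.strong_induction_on with
    | _ j ih =>
      intro hj1 hjg
      have hlamMs : ∀ i, 1 ≤ i → i ≤ g → lam i ∈ Ms i := by
        intro i h1 h2
        rw [hMs i h1 h2]
        exact AddSubgroup.mem_sup_right (AddSubgroup.mem_closure_singleton.mpr ⟨1, one_zsmul _⟩)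
      rcases Nat.lt_or_ge j 2 with h2 | h2
      · have : j = 1 := by omega
        subst this
        refine ⟨?_, hγ1 ▸ hlamMs 1 le_rfl hjg⟩
        rw [hγ1, sub_self]
        exact AddSubgroup.zero_mem _
      · obtain ⟨j', rfl⟩ : ∃ j', j = j' + 1 := ⟨j - 1, by omega⟩
        have hj'1 : 1 ≤ j' := by omega
        have hj'g : j' ≤ g := by omega
        have hnsmul : (nj j' : ℚ) • γ j' ∈ Ms j' := by
          rw [hrel j' hj'1 hj'g]
          refine AddSubgroup.add_mem _ (hMsMono 0 j' (by omega) hj'g (hMQ _)) ?_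
          refine AddSubgroup.sum_mem _ ?_
          intro i hi
          have hi' := Finset.mem_Icc.mp hi
          exact hsmul_nat _ _ _
            (hMsMono i j' (by omega) hj'g (ih i (by omega) (by omega) (by omega)).2)
        have e : γ (j' + 1) - lam (j' + 1) = ((nj j' : ℚ) • γ j') - lam j' := by
          rw [hγrec j' hj'1 (by omega)]; abel
        have h1 : γ (j' + 1) - lam (j' + 1) ∈ Ms j' := by
          rw [e]
          exact AddSubgroup.sub_mem _ hnsmul (hlamMs j' hj'1 hj'g)
        refine ⟨by simpa using h1, ?_⟩
        have : γ (j' + 1) = (γ (j' + 1) - lam (j' + 1)) + lam (j' + 1) := by abel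
        rw [this]
        exact AddSubgroup.add_mem _ (hMsMono j' (j' + 1) (by omega) hjg h1)
          (hlamMs (j' + 1) (by omega) hjg)
  have hγMs : ∀ i, 1 ≤ i → i ≤ g → γ i ∈ Ms i := fun i h1 h2 => (hγkey i h1 h2).2
  -- divisibility criterion
  have hdvd : ∀ j, 1 ≤ j → j ≤ g → ∀ k : ℤ, k • γ j ∈ Ms (j - 1) ↔ (nj j : ℤ) ∣ k := by
    intro j h1 h2 k
    have hlam := zsmul_mem_iff_dvd (Ms (j - 1)) (Ms j) (lam j) (hMs j h1 h2) (nj j)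
      (hnj j h1 h2).symm (by have := hnj2 j h1 h2; omega) k
    have hdiff : k • γ j - k • lam j ∈ Ms (j - 1) := by
      rw [← smul_sub]
      exact AddSubgroup.zsmul_mem _ (hγkey j h1 h2).1 k
    rw [← hlam]
    constructor
    · intro h; simpa using AddSubgroup.sub_mem _ h hdiff
    · intro h; simpa using AddSubgroup.add_mem _ hdiff h
  -- uniqueness core
  have hcore : ∀ j, j ≤ g → ∀ k : ℕ → ℤ,
      (∀ i, 1 ≤ i → i ≤ j → |k i| < nj i) →
      (∑ i ∈ Finset.Icc 1 j, k i • γ i) ∈ Ms 0 →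
      ∀ i, 1 ≤ i → i ≤ j → k i = 0 := by
    intro j
    induction j with
    | zero => intro _ _ _ _ i h1 h2; omega
    | succ j ihj =>
      intro hjg k hbound hmem
      have hpart : ∑ i ∈ Finset.Icc 1 j, k i • γ i ∈ Ms j := by
        refine AddSubgroup.sum_mem _ ?_
        intro i hi
        have hi' := Finset.mem_Icc.mp hi
        exact AddSubgroup.zsmul_mem _
          (hMsMono i j (by omega) (by omega) (hγMs i (by omega) (by omega))) _
      have hsplit : ∑ i ∈ Finset.Icc 1 (j + 1), k i • γ i
          = (∑ i ∈ Finset.Icc 1 j, k i • γ i) + k (j + 1) • γ (j + 1) :=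
        Finset.sum_Icc_succ_top (by omega) _
      have hlast : k (j + 1) • γ (j + 1) ∈ Ms j := by
        have h0 : ∑ i ∈ Finset.Icc 1 (j + 1), k i • γ i ∈ Ms j :=
          hMsMono 0 j (by omega) (by omega) hmem
        rw [hsplit] at h0
        simpa using AddSubgroup.sub_mem _ h0 hpart
      have hd := (hdvd (j + 1) (by omega) hjg (k (j + 1))).mp (by simpa using hlast)
      have hk0 : k (j + 1) = 0 :=
        Int.eq_zero_of_abs_lt_dvd hd (hbound (j + 1) (by omega) (by omega))
      intro i h1 h2
      rcases (by omega : i = j + 1 ∨ i ≤ j) with h | h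
      · rw [h]; exact hk0
      · refine ihj (by omega) k (fun i a b => hbound i a (by omega)) ?_ i h1 h
        rw [hsplit, hk0, zero_smul, add_zero] at hmem
        exact hmem
  -- rewriting the Fin g sums as Icc sums
  have hext : ∀ v : Fin g → ℕ,
      ∑ k : Fin g, ((v k : ℚ)) • γ ((k : ℕ) + 1)
        = ∑ i ∈ Finset.Icc 1 g, ((vextD g v i : ℚ)) • γ i := by
    intro v
    rw [← sum_reindexAux g (fun i => ((vextD g v i : ℚ)) • γ i)]
    refine Finset.sum_congr rfl ?_
    intro k _
    rw [vextD_succ]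
    norm_num
  -- injectivity of the lattice embedding
  have hinj : Function.Injective (intCastHomQ d) := by
    intro a b h
    funext i
    have h2 : ((a i : ℚ)) = (b i : ℚ) := congrFun h i
    exact_mod_cast h2
  -- uniqueness of normal forms
  have hNF : ∀ a b : (↥(Mmon ρ) × (Fin g → ℕ)), (∀ k : Fin g, a.2 k < nj ((k : ℕ) + 1)) →
      (∀ k : Fin g, b.2 k < nj ((k : ℕ) + 1)) → φ a = φ b → a = b := by
    rintro ⟨α, v⟩ ⟨β, w⟩ hva hwb hab
    rw [hφ_apply, hφ_apply] at hab
    simp only at hab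
    rw [hext v, hext w] at hab
    have hmem : (∑ i ∈ Finset.Icc 1 g, (vextD g v i - vextD g w i) • γ i) ∈ Ms 0 := by
      have e : ∑ i ∈ Finset.Icc 1 g, (vextD g v i - vextD g w i) • γ i
          = intCastHomQ d ((β : Fin d → ℤ) - (α : Fin d → ℤ)) := by
        have e2 : ∀ i ∈ Finset.Icc 1 g, (vextD g v i - vextD g w i) • γ i
            = ((vextD g v i : ℚ)) • γ i - ((vextD g w i : ℚ)) • γ i := by
          intro i _
          rw [sub_smul, Int.cast_smul_eq_zsmul, Int.cast_smul_eq_zsmul]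
        rw [Finset.sum_congr rfl e2, Finset.sum_sub_distrib, map_sub]
        rw [sub_eq_sub_iff_add_eq_add]
        exact (add_comm _ _).trans hab
      rw [e]
      exact hMQ _
    have hbound : ∀ i, 1 ≤ i → i ≤ g → |vextD g v i - vextD g w i| < nj i := by
      intro i h1 h2
      have h : 1 ≤ i ∧ i ≤ g := ⟨h1, h2⟩
      have hi1 : i - 1 < g := by omega
      have hv : v ⟨i - 1, hi1⟩ < nj i := by
        have := hva ⟨i - 1, hi1⟩
        simpa [show (i - 1) + 1 = i from by omega] using this
      have hw : w ⟨i - 1, hi1⟩ < nj i := by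
        have := hwb ⟨i - 1, hi1⟩
        simpa [show (i - 1) + 1 = i from by omega] using this
      have hvv : vextD g v i = (v ⟨i - 1, hi1⟩ : ℤ) := by
        simp only [vextD, dif_pos h]
      have hww : vextD g w i = (w ⟨i - 1, hi1⟩ : ℤ) := by
        simp only [vextD, dif_pos h]
      rw [hvv, hww, abs_lt]
      omega
    have hzero := hcore g le_rfl _ hbound hmem
    have hvw : v = w := by
      funext k
      have := hzero ((k : ℕ) + 1) (by omega) k.2
      rw [vextD_succ, vextD_succ] at this
      omega
    have hαβ : α = β := by
      subst hvw
      have := add_right_cancel hab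
      exact Subtype.ext (hinj this)
    rw [hvw, hαβ]
  -- the value of φ on the single-coordinate vectors
  have hsingle_sum : ∀ (j : Fin g) (n : ℕ),
      ∑ k : Fin g, (((Pi.single j n : Fin g → ℕ) k : ℚ)) • γ ((k : ℕ) + 1)
        = (n : ℚ) • γ ((j : ℕ) + 1) := by
    intro j n
    rw [Finset.sum_eq_single j]
    · simp
    · intro k _ hk
      rw [Pi.single_eq_of_ne hk]
      simp
    · simp
  have hlcsum : ∀ j : Fin g,
      ∑ k : Fin g, ((lc ((j : ℕ) + 1) ((k : ℕ) + 1) : ℚ)) • γ ((k : ℕ) + 1)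
        = ∑ i ∈ Finset.Icc 1 ((j : ℕ) + 1 - 1), (lc ((j : ℕ) + 1) i : ℚ) • γ i := by
    intro j
    calc ∑ k : Fin g, ((lc ((j : ℕ) + 1) ((k : ℕ) + 1) : ℚ)) • γ ((k : ℕ) + 1)
        = ∑ i ∈ Finset.Icc 1 g, (lc ((j : ℕ) + 1) i : ℚ) • γ i :=
          sum_reindexAux g (fun i => (lc ((j : ℕ) + 1) i : ℚ) • γ i)
      _ = ∑ i ∈ Finset.Icc 1 ((j : ℕ) + 1 - 1), (lc ((j : ℕ) + 1) i : ℚ) • γ i := by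
          symm
          apply Finset.sum_subset
          · apply Finset.Icc_subset_Icc_right
            have := j.2; omega
          · intro i hig hij
            have h1 := Finset.mem_Icc.mp hig
            have h2 : ¬ (1 ≤ i ∧ i ≤ (j : ℕ) + 1 - 1) := fun h => hij (Finset.mem_Icc.mpr h)
            have : lc ((j : ℕ) + 1) i = 0 := hlc_zero _ i (Or.inr (by omega))
            rw [this]
            simp
  have hφpair : ∀ j : Fin g,
      φ ((0, Pi.single j (nj ((j : ℕ) + 1))) : (↥(Mmon ρ) × (Fin g → ℕ)))
        = φ ((⟨alph ((j : ℕ) + 1), halph ((j : ℕ) + 1)⟩,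
            fun i : Fin g => lc ((j : ℕ) + 1) ((i : ℕ) + 1)) : (↥(Mmon ρ) × (Fin g → ℕ))) := by
    intro j
    rw [hφ_apply, hφ_apply]
    simp only
    rw [hsingle_sum, hlcsum]
    have h0 : ((0 : ↥(Mmon ρ)) : Fin d → ℤ) = 0 := rfl
    rw [h0, map_zero, zero_add]
    exact hrel ((j : ℕ) + 1) (by omega) (by have := j.2; omega)
  -- the binomials lie in the kernel
  have hBker : ∀ j : Fin g,
      (AddMonoidAlgebra.single ((0, Pi.single j (nj ((j : ℕ) + 1))) : (↥(Mmon ρ) × (Fin g → ℕ))) (1 : ℂ))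
        - AddMonoidAlgebra.single ((⟨alph ((j : ℕ) + 1), halph ((j : ℕ) + 1)⟩,
            fun i : Fin g => lc ((j : ℕ) + 1) ((i : ℕ) + 1)) : (↥(Mmon ρ) × (Fin g → ℕ))) (1 : ℂ)
        ∈ RingHom.ker (AddMonoidAlgebra.mapDomainAlgHom ℂ ℂ (AddMonoidHom.mrangeRestrict φ)) := by
    intro j
    rw [RingHom.mem_ker, map_sub]
    have happ : ∀ a : (↥(Mmon ρ) × (Fin g → ℕ)),
        (AddMonoidAlgebra.mapDomainAlgHom ℂ ℂ (AddMonoidHom.mrangeRestrict φ))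
          (AddMonoidAlgebra.single a (1 : ℂ))
        = AddMonoidAlgebra.single (φ.mrangeRestrict a) (1 : ℂ) := by
      intro a
      rw [AddMonoidAlgebra.mapDomainAlgHom_apply, AddMonoidAlgebra.mapDomain_single]
    have heq : φ.mrangeRestrict ((0, Pi.single j (nj ((j : ℕ) + 1))) : (↥(Mmon ρ) × (Fin g → ℕ)))
        = φ.mrangeRestrict ((⟨alph ((j : ℕ) + 1), halph ((j : ℕ) + 1)⟩,
            fun i : Fin g => lc ((j : ℕ) + 1) ((i : ℕ) + 1)) : (↥(Mmon ρ) × (Fin g → ℕ))) := by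
      apply Subtype.ext
      rw [AddMonoidHom.coe_mrangeRestrict, AddMonoidHom.coe_mrangeRestrict]
      exact hφpair j
    show (AddMonoidAlgebra.mapDomainAlgHom ℂ ℂ (AddMonoidHom.mrangeRestrict φ))
        (AddMonoidAlgebra.single ((0, Pi.single j (nj ((j : ℕ) + 1))) : (↥(Mmon ρ) × (Fin g → ℕ))) (1 : ℂ))
      - (AddMonoidAlgebra.mapDomainAlgHom ℂ ℂ (AddMonoidHom.mrangeRestrict φ))
        (AddMonoidAlgebra.single ((⟨alph ((j : ℕ) + 1), halph ((j : ℕ) + 1)⟩,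
            fun i : Fin g => lc ((j : ℕ) + 1) ((i : ℕ) + 1)) : (↥(Mmon ρ) × (Fin g → ℕ))) (1 : ℂ)) = 0
    rw [happ, happ, heq, sub_self]
  -- positivity of weights
  have hPpos : ∀ m, m ≤ g → 0 < Pw nj m := by
    intro m
    induction m with
    | zero => intro _; exact Nat.one_pos
    | succ m ihm =>
      intro hm
      have h2 := hnj2 (m + 1) (by omega) hm
      have := ihm (by omega)
      simp only [Pw]
      positivity
  have hPbound : ∀ m, m ≤ g → ∑ k ∈ Finset.range m, (nj (k + 1) - 1) * Pw nj k < Pw nj m := by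
    intro m
    induction m with
    | zero => intro _; simp [Pw]
    | succ m ihm =>
      intro hm
      rw [Finset.sum_range_succ]
      have h2 := hnj2 (m + 1) (by omega) hm
      have hp := hPpos m (by omega)
      have hS := ihm (by omega)
      have e : Pw nj (m + 1) = Pw nj m * nj (m + 1) := rfl
      obtain ⟨a, ha⟩ : ∃ a, nj (m + 1) = a + 2 := ⟨nj (m + 1) - 2, by omega⟩
      rw [e, ha]
      have e2 : a + 2 - 1 = a + 1 := by omega
      rw [e2]
      nlinarith [hS, hp]
  -- the measure
  set μ : (Fin g → ℕ) → ℕ := fun v => ∑ k : Fin g, v k * Pw nj (k : ℕ) with hμdef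
  have hμadd : ∀ a b : Fin g → ℕ, μ (a + b) = μ a + μ b := by
    intro a b
    simp [hμdef, add_mul, Finset.sum_add_distrib]
  have hμsingle : ∀ (j : Fin g) (n : ℕ), μ (Pi.single j n) = n * Pw nj (j : ℕ) := by
    intro j n
    show ∑ k : Fin g, (Pi.single j n : Fin g → ℕ) k * Pw nj (k : ℕ) = n * Pw nj (j : ℕ)
    rw [Finset.sum_eq_single j]
    · simp
    · intro k _ hk
      rw [Pi.single_eq_of_ne hk]
      simp
    · simp
  have hsm : ∀ a b : ↥(Mmon ρ) × (Fin g → ℕ),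
      (AddMonoidAlgebra.single a (1 : ℂ)) * AddMonoidAlgebra.single b (1 : ℂ)
        = AddMonoidAlgebra.single (a + b) (1 : ℂ) := by
    intro a b
    rw [AddMonoidAlgebra.single_mul_single, one_mul]
  -- reduction to normal form
  have hred : ∀ N : ℕ, ∀ (α : ↥(Mmon ρ)) (v : Fin g → ℕ), μ v ≤ N →
      ∃ t : (↥(Mmon ρ) × (Fin g → ℕ)), (∀ k : Fin g, t.2 k < nj ((k : ℕ) + 1)) ∧ φ ((α, v) : (↥(Mmon ρ) × (Fin g → ℕ))) = φ t ∧
        (AddMonoidAlgebra.single ((α, v) : (↥(Mmon ρ) × (Fin g → ℕ))) (1 : ℂ) - AddMonoidAlgebra.single t (1 : ℂ)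
          : AddMonoidAlgebra ℂ (↥(Mmon ρ) × (Fin g → ℕ))) ∈ I := by
    intro N
    induction N using Nat.strong_induction_on with
    | _ N ihN =>
      intro α v hμv
      by_cases hnf : ∀ k : Fin g, v k < nj ((k : ℕ) + 1)
      · exact ⟨(α, v), hnf, rfl, by rw [sub_self]; exact Ideal.zero_mem I⟩
      · push_neg at hnf
        obtain ⟨j, hj⟩ := hnf
        set n := nj ((j : ℕ) + 1) with hndef
        set v' : Fin g → ℕ := fun k => if k = j then v j - n else v k with hv'def
        have hv : v = v' + Pi.single j n := by
          funext k
          by_cases h : k = j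
          · subst h
            simp [hv'def]
            omega
          · simp [hv'def, h, Pi.single_eq_of_ne h]
        set lvec : Fin g → ℕ := fun i : Fin g => lc ((j : ℕ) + 1) ((i : ℕ) + 1) with hlvecdef
        set αs : ↥(Mmon ρ) := ⟨alph ((j : ℕ) + 1), halph ((j : ℕ) + 1)⟩ with hαsdef
        have e1 : ((α, v') : (↥(Mmon ρ) × (Fin g → ℕ))) + ((0, Pi.single j n) : (↥(Mmon ρ) × (Fin g → ℕ))) = ((α, v) : (↥(Mmon ρ) × (Fin g → ℕ))) := by
          rw [Prod.mk_add_mk, add_zero, ← hv]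
        have e2 : ((α, v') : (↥(Mmon ρ) × (Fin g → ℕ))) + ((αs, lvec) : (↥(Mmon ρ) × (Fin g → ℕ))) = ((α + αs, v' + lvec) : (↥(Mmon ρ) × (Fin g → ℕ))) := rfl
        have hfac : (AddMonoidAlgebra.single ((α, v) : (↥(Mmon ρ) × (Fin g → ℕ))) (1 : ℂ))
              - AddMonoidAlgebra.single ((α + αs, v' + lvec) : (↥(Mmon ρ) × (Fin g → ℕ))) (1 : ℂ)
            = AddMonoidAlgebra.single ((α, v') : (↥(Mmon ρ) × (Fin g → ℕ))) (1 : ℂ)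
              * (AddMonoidAlgebra.single ((0, Pi.single j n) : (↥(Mmon ρ) × (Fin g → ℕ))) (1 : ℂ)
                - AddMonoidAlgebra.single ((αs, lvec) : (↥(Mmon ρ) × (Fin g → ℕ))) (1 : ℂ)) := by
          rw [mul_sub, hsm, hsm, e1, e2]
        have hmemI : (AddMonoidAlgebra.single ((α, v) : (↥(Mmon ρ) × (Fin g → ℕ))) (1 : ℂ))
              - AddMonoidAlgebra.single ((α + αs, v' + lvec) : (↥(Mmon ρ) × (Fin g → ℕ))) (1 : ℂ) ∈ I := by
          rw [hfac]
          refine Ideal.mul_mem_left I _ ?_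
          rw [hIdef]
          exact Ideal.subset_span ⟨j, rfl⟩
        have hφs : φ ((α, v) : (↥(Mmon ρ) × (Fin g → ℕ))) = φ ((α + αs, v' + lvec) : (↥(Mmon ρ) × (Fin g → ℕ))) := by
          rw [← e1, ← e2, map_add, map_add, hφpair j]
        -- measure decrease
        have hμl : μ lvec < Pw nj ((j : ℕ) + 1) := by
          have hb1 : μ lvec = ∑ i ∈ Finset.range g, lc ((j : ℕ) + 1) (i + 1) * Pw nj i := by
            rw [hμdef]
            exact Fin.sum_univ_eq_sum_range (fun i => lc ((j : ℕ) + 1) (i + 1) * Pw nj i) g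
          have hb2 : ∑ i ∈ Finset.range g, lc ((j : ℕ) + 1) (i + 1) * Pw nj i
              = ∑ i ∈ Finset.range (j : ℕ), lc ((j : ℕ) + 1) (i + 1) * Pw nj i := by
            symm
            apply Finset.sum_subset
            · exact Finset.range_subset_range.mpr (by have := j.2; omega)
            · intro i hig hij
              rw [Finset.mem_range] at hig hij
              rw [hlc_zero _ (i + 1) (Or.inr (by omega))]
              simp
          have hb3 : ∑ i ∈ Finset.range (j : ℕ), lc ((j : ℕ) + 1) (i + 1) * Pw nj i
              ≤ ∑ i ∈ Finset.range (j : ℕ), (nj (i + 1) - 1) * Pw nj i := by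
            refine Finset.sum_le_sum ?_
            intro i hi
            rw [Finset.mem_range] at hi
            refine Nat.mul_le_mul_right _ ?_
            exact hlc_bound ((j : ℕ) + 1) (i + 1) (by omega) (by have := j.2; omega)
              (by omega) (by omega)
          have hb4 := hPbound (j : ℕ) (by have := j.2; omega)
          have hb5 : Pw nj (j : ℕ) ≤ Pw nj ((j : ℕ) + 1) := by
            have h2 := hnj2 ((j : ℕ) + 1) (by omega) (by have := j.2; omega)
            have e : Pw nj ((j : ℕ) + 1) = Pw nj (j : ℕ) * nj ((j : ℕ) + 1) := rfl
            rw [e]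
            nlinarith [hPpos (j : ℕ) (by have := j.2; omega)]
          omega
        have hdec : μ (v' + lvec) < μ v := by
          rw [hμadd]
          conv_rhs => rw [hv, hμadd, hμsingle]
          have e : n * Pw nj (j : ℕ) = Pw nj ((j : ℕ) + 1) := by
            have : Pw nj ((j : ℕ) + 1) = Pw nj (j : ℕ) * nj ((j : ℕ) + 1) := rfl
            rw [this, hndef, Nat.mul_comm]
          omega
        obtain ⟨t, ht1, ht2, ht3⟩ := ihN (μ (v' + lvec)) (by omega) (α + αs) (v' + lvec) le_rfl
        refine ⟨t, ht1, hφs.trans ht2, ?_⟩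
        have := sub_add_sub_cancel (AddMonoidAlgebra.single ((α, v) : (↥(Mmon ρ) × (Fin g → ℕ))) (1 : ℂ))
          (AddMonoidAlgebra.single ((α + αs, v' + lvec) : (↥(Mmon ρ) × (Fin g → ℕ))) (1 : ℂ)) (AddMonoidAlgebra.single t (1 : ℂ))
        rw [← this]
        exact Ideal.add_mem I hmemI ht3
  -- every fiber binomial lies in I
  have hpairI : ∀ a b : (↥(Mmon ρ) × (Fin g → ℕ)), φ a = φ b →
      (AddMonoidAlgebra.single a (1 : ℂ) - AddMonoidAlgebra.single b (1 : ℂ) : AddMonoidAlgebra ℂ (↥(Mmon ρ) × (Fin g → ℕ))) ∈ I := by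
    intro a b hab
    obtain ⟨t, ht1, ht2, ht3⟩ := hred (μ a.2) a.1 a.2 le_rfl
    obtain ⟨s, hs1, hs2, hs3⟩ := hred (μ b.2) b.1 b.2 le_rfl
    have hts : t = s := by
      refine hNF t s ht1 hs1 ?_
      rw [← ht2, ← hs2]
      simpa using hab
    have := sub_sub_sub_cancel_right (AddMonoidAlgebra.single a (1 : ℂ)) (AddMonoidAlgebra.single b (1 : ℂ))
      (AddMonoidAlgebra.single t (1 : ℂ))
    rw [← this]
    refine Ideal.sub_mem I ?_ ?_
    · simpa using ht3
    · rw [hts]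
      simpa using hs3
  -- conclusion
  refine le_antisymm ?_ ?_
  · have hsurj := AddMonoidHom.mrangeRestrict_surjective φ
    refine ker_mapDomain_le φ.mrangeRestrict (Function.surjInv hsurj) I ?_
    intro a
    refine hpairI a _ ?_
    have h1 : φ.mrangeRestrict (Function.surjInv hsurj (φ.mrangeRestrict a))
        = φ.mrangeRestrict a := Function.surjInv_eq hsurj _
    have := congrArg (Subtype.val) h1
    rw [AddMonoidHom.coe_mrangeRestrict, AddMonoidHom.coe_mrangeRestrict] at this
    exact this.symm
  · rw [Ideal.span_le]
    rintro x ⟨j, rfl⟩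
    exact hBker j
end

section
/- In the setting below, set λ_0 := 0, γ_0 := 0, n_0 := 1, let N_j := {a ∈ N : ⟨a, u⟩ ∈ ℤ for all u ∈ M_j} (the dual lattice of M_j), let u_1, …, u_g be the standard basis of the ℝ^g-factor of ℝ^d × ℝ^g, and for 1 ≤ j ≤ g define the cone ρ_j^g := {(a, ⟨a,γ_1⟩, …, ⟨a,γ_j⟩, n_j⟨a,γ_j⟩, n_jn_{j+1}⟨a,γ_j⟩, …, n_j⋯n_{g-1}⟨a,γ_j⟩) : a ∈ ρ} ⊂ ℝ^d × ℝ^g, with ρ_0^g := ρ × {0}. For 1 ≤ j ≤ g let σ_j^- := {(a,v) ∈ ρ × ℝ : 0 ≤ v ≤ ⟨a, λ_j − λ_{j-1}⟩} and σ_j^+ := {(a,v) ∈ ρ × ℝ : v ≥ ⟨a, λ_j − λ_{j-1}⟩ and v ≥ 0}, and define linear maps ξ_j^-, ξ_j^+ : ℝ^d × ℝ → ℝ^d × ℝ^g by ξ_j^-(a,v) := (a, ⟨a,γ_1⟩, …, ⟨a,γ_{j-1}⟩, w, n_jw, n_jn_{j+1}w, …, n_j⋯n_{g-1}w) with w :=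 v + n_{j-1}⟨a,γ_{j-1}⟩, and ξ_j^+(a,v) := (a, ⟨a,γ_1⟩, …, ⟨a,γ_{j-1}⟩, v + n_{j-1}⟨a,γ_{j-1}⟩, n_j⟨a,γ_j⟩, n_jn_{j+1}⟨a,γ_j⟩, …, n_j⋯n_{g-1}⟨a,γ_j⟩). Then: (i) ξ_j^- and ξ_j^+ are injective; (ii) ξ_j^-(σ_j^-) equals the Minkowski sum ρ_{j-1}^g + ρ_j^g, and ξ_j^+(σ_j^+) = ρ_j^g + ℝ_{≥0}u_j; (iii) identifying N with ℤ^d, ξ_j^-(N_{j-1} × ℤ) = ξ_j^-(ℝ^d × ℝ) ∩ (ℤ^d × ℤ^g) and ξ_j^+(N_{j-1} × ℤ) = ξ_j^+(ℝ^d × ℝ) ∩ (ℤ^d × ℤ^g). -/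
open Finset

/-- The pairing of `a ∈ ℝ^d` with a rational vector. -/
noncomputable def pairQ {d : ℕ} (a : Fin d → ℝ) (u : Fin d → ℚ) : ℝ := ∑ i, a i * (u i : ℝ)

open Finset in
/-- The cone `ρ_j^g ⊂ ℝ^d × ℝ^g` (with the convention `γ 0 = 0`, so `ρ_0^g = ρ × {0}`). -/
noncomputable def rhoJG {d : ℕ} (g : ℕ) (ρ : Set (Fin d → ℝ)) (γ : ℕ → Fin d → ℚ)
    (nj : ℕ → ℕ) (j : ℕ) : Set ((Fin d → ℝ) × (Fin g → ℝ)) :=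
  {p | ∃ a ∈ ρ, p = (a, fun k : Fin g =>
    if (k : ℕ) + 1 ≤ j then pairQ a (γ ((k : ℕ) + 1))
    else (∏ i ∈ Ico j ((k : ℕ) + 1), (nj i : ℝ)) * pairQ a (γ j))}

/-- The cone `σ_j^- = {(a,v) ∈ ρ × ℝ : 0 ≤ v ≤ ⟨a, λ_j − λ_{j-1}⟩}`. -/
noncomputable def sigmaMinus {d : ℕ} (ρ : Set (Fin d → ℝ)) (lam : ℕ → Fin d → ℚ) (j : ℕ) :
    Set ((Fin d → ℝ) × ℝ) :=
  {p | p.1 ∈ ρ ∧ 0 ≤ p.2 ∧ p.2 ≤ pairQ p.1 (lam j - lam (j - 1))}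

/-- The cone `σ_j^+ = {(a,v) ∈ ρ × ℝ : v ≥ ⟨a, λ_j − λ_{j-1}⟩, v ≥ 0}`. -/
noncomputable def sigmaPlus {d : ℕ} (ρ : Set (Fin d → ℝ)) (lam : ℕ → Fin d → ℚ) (j : ℕ) :
    Set ((Fin d → ℝ) × ℝ) :=
  {p | p.1 ∈ ρ ∧ 0 ≤ p.2 ∧ pairQ p.1 (lam j - lam (j - 1)) ≤ p.2}

open Finset in
/-- The linear map `ξ_j^-`. -/
noncomputable def xiMinus {d : ℕ} (g : ℕ) (γ : ℕ → Fin d → ℚ) (nj : ℕ → ℕ) (j : ℕ) :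
    (Fin d → ℝ) × ℝ → (Fin d → ℝ) × (Fin g → ℝ) :=
  fun p => (p.1, fun k : Fin g =>
    if (k : ℕ) + 1 ≤ j - 1 then pairQ p.1 (γ ((k : ℕ) + 1))
    else (∏ i ∈ Ico j ((k : ℕ) + 1), (nj i : ℝ))
      * (p.2 + (nj (j - 1) : ℝ) * pairQ p.1 (γ (j - 1))))

open Finset in
/-- The linear map `ξ_j^+`. -/
noncomputable def xiPlus {d : ℕ} (g : ℕ) (γ : ℕ → Fin d → ℚ) (nj : ℕ → ℕ) (j : ℕ) :
    (Fin d → ℝ) × ℝ → (Fin d → ℝ) × (Fin g → ℝ) :=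
  fun p => (p.1, fun k : Fin g =>
    if (k : ℕ) + 1 ≤ j - 1 then pairQ p.1 (γ ((k : ℕ) + 1))
    else if (k : ℕ) + 1 = j then p.2 + (nj (j - 1) : ℝ) * pairQ p.1 (γ (j - 1))
    else (∏ i ∈ Ico j ((k : ℕ) + 1), (nj i : ℝ)) * pairQ p.1 (γ j))

/-- The dual lattice `N_j = {a ∈ N : ⟨a, u⟩ ∈ ℤ for all u ∈ M_j}`. -/
def Nlat {d : ℕ} (Ms : ℕ → AddSubgroup (Fin d → ℚ)) (j : ℕ) : Set (Fin d → ℤ) :=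
  {a | ∀ u ∈ Ms j, ∃ z : ℤ, ∑ i, (a i : ℚ) * u i = (z : ℚ)}

section Helpers

variable {d : ℕ}

lemma pairQ_add_left (a b : Fin d → ℝ) (u : Fin d → ℚ) :
    pairQ (a + b) u = pairQ a u + pairQ b u := by
  simp [pairQ, add_mul, Finset.sum_add_distrib]

lemma pairQ_smul_left (c : ℝ) (a : Fin d → ℝ) (u : Fin d → ℚ) :
    pairQ (c • a) u = c * pairQ a u := by
  simp [pairQ, Finset.mul_sum, mul_assoc]

lemma pairQ_zero_left (u : Fin d → ℚ) : pairQ (0 : Fin d → ℝ) u = 0 := by simp [pairQ]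

lemma pairQ_add_right (a : Fin d → ℝ) (u v : Fin d → ℚ) :
    pairQ a (u + v) = pairQ a u + pairQ a v := by
  simp [pairQ, mul_add, Finset.sum_add_distrib]

lemma pairQ_zero_right (a : Fin d → ℝ) : pairQ a (0 : Fin d → ℚ) = 0 := by simp [pairQ]

lemma pairQ_sub_right (a : Fin d → ℝ) (u v : Fin d → ℚ) :
    pairQ a (u - v) = pairQ a u - pairQ a v := by
  simp [pairQ, mul_sub, Finset.sum_sub_distrib]

lemma pairQ_qsmul_right (a : Fin d → ℝ) (q : ℚ) (u : Fin d → ℚ) :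
    pairQ a (q • u) = (q : ℝ) * pairQ a u := by
  simp [pairQ, Finset.mul_sum]; ring_nf
  exact Finset.sum_congr rfl fun i _ => by ring

lemma dotR_qcastR (a : Fin d → ℝ) (u : Fin d → ℚ) : dotR a (qcastR u) = pairQ a u := rfl

/-- ℚ-valued pairing of an integer vector with a rational vector. -/
def PbHom (b : Fin d → ℤ) : (Fin d → ℚ) →+ ℚ where
  toFun u := ∑ i, (b i : ℚ) * u i
  map_zero' := by simp
  map_add' u v := by simp [mul_add, Finset.sum_add_distrib]

lemma PbHom_smul (b : Fin d → ℤ) (q : ℚ) (u : Fin d → ℚ) :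
    PbHom b (q • u) = q * PbHom b u := by
  simp only [PbHom, AddMonoidHom.coe_mk, ZeroHom.coe_mk, Finset.mul_sum, Pi.smul_apply,
    smul_eq_mul]
  exact Finset.sum_congr rfl fun i _ => by ring

lemma pairQ_icastR (b : Fin d → ℤ) (u : Fin d → ℚ) :
    pairQ (icastR b) u = ((PbHom b u : ℚ) : ℝ) := by
  simp [pairQ, icastR, PbHom]

lemma nonnegSpan_zero_mem (s : Set (Fin d → ℝ)) : (0 : Fin d → ℝ) ∈ nonnegSpan s :=
  ⟨0, Fin.elim0, Fin.elim0, fun i => i.elim0, fun i => i.elim0, by simp⟩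

lemma nonnegSpan_add_mem {s : Set (Fin d → ℝ)} {x y : Fin d → ℝ}
    (hx : x ∈ nonnegSpan s) (hy : y ∈ nonnegSpan s) : x + y ∈ nonnegSpan s := by
  obtain ⟨n, c, v, hc, hv, rfl⟩ := hx
  obtain ⟨m, c', v', hc', hv', rfl⟩ := hy
  refine ⟨n + m, Fin.append c c', Fin.append v v', ?_, ?_, ?_⟩
  · intro i
    refine Fin.addCases (fun i => ?_) (fun i => ?_) i
    · rw [Fin.append_left]; exact hc i
    · rw [Fin.append_right]; exact hc' i
  · intro i
    refine Fin.addCases (fun i => ?_) (fun i => ?_) i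
    · rw [Fin.append_left]; exact hv i
    · rw [Fin.append_right]; exact hv' i
  · rw [Fin.sum_univ_add]
    simp [Fin.append_left, Fin.append_right]

lemma nonnegSpan_smul_mem {s : Set (Fin d → ℝ)} {t : ℝ} (ht : 0 ≤ t) {x : Fin d → ℝ}
    (hx : x ∈ nonnegSpan s) : t • x ∈ nonnegSpan s := by
  obtain ⟨n, c, v, hc, hv, rfl⟩ := hx
  exact ⟨n, fun i => t * c i, v, fun i => mul_nonneg ht (hc i), hv, by
    rw [Finset.smul_sum]; simp [smul_smul]⟩

lemma cone_zero {ρ : Set (Fin d → ℝ)} (hρ : IsRatPolyCone ρ) : (0 : Fin d → ℝ) ∈ ρ := by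
  obtain ⟨s, rfl⟩ := hρ; exact nonnegSpan_zero_mem _

lemma cone_add {ρ : Set (Fin d → ℝ)} (hρ : IsRatPolyCone ρ) {x y : Fin d → ℝ}
    (hx : x ∈ ρ) (hy : y ∈ ρ) : x + y ∈ ρ := by
  obtain ⟨s, rfl⟩ := hρ; exact nonnegSpan_add_mem hx hy

lemma cone_smul {ρ : Set (Fin d → ℝ)} (hρ : IsRatPolyCone ρ) {t : ℝ} (ht : 0 ≤ t)
    {x : Fin d → ℝ} (hx : x ∈ ρ) : t • x ∈ ρ := by
  obtain ⟨s, rfl⟩ := hρ; exact nonnegSpan_smul_mem ht hx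

end Helpers
lemma PbHom_apply {d : ℕ} (b : Fin d → ℤ) (u : Fin d → ℚ) :
    PbHom b u = ∑ i, (b i : ℚ) * u i := rfl
/-- The maps `ξ_j^±` are injective, map `σ_j^∓` onto `ρ_{j-1}^g + ρ_j^g` resp. `ρ_j^g + ℝ_{≥0}u_j`, and identify `N_{j-1} × ℤ` with the integral points of their images. -/
theorem stmt_19
    (d g : ℕ) (hd : 1 ≤ d) (hg : 1 ≤ g)
    (ρ : Set (Fin d → ℝ))
    (hρ : IsRatPolyCone ρ)
    (hρsc : ∀ x ∈ ρ, -x ∈ ρ → x = 0)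
    (hρdim : Submodule.span ℝ ρ = ⊤)
    (hdsc : ∀ u ∈ dualSet ρ, -u ∈ dualSet ρ → u = 0)
    (hddim : Submodule.span ℝ (dualSet ρ) = ⊤)
    (lam : ℕ → Fin d → ℚ)
    (hlam_mem : ∀ j, 1 ≤ j → j ≤ g → qcastR (lam j) ∈ dualSet ρ)
    (hlam_lt : ∀ j, 1 ≤ j → j < g → ltRho ρ (lam j) (lam (j + 1)))
    (Ms : ℕ → AddSubgroup (Fin d → ℚ))
    (hM0 : Ms 0 = zLatQ d)
    (hMs : ∀ j, 1 ≤ j → j ≤ g → Ms j = Ms (j - 1) ⊔ AddSubgroup.closure {lam j})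
    (hlam_not : ∀ j, 1 ≤ j → j ≤ g → lam j ∉ Ms (j - 1))
    (nj : ℕ → ℕ)
    (hnj : ∀ j, 1 ≤ j → j ≤ g → nj j = (Ms (j - 1)).relIndex (Ms j))
    (hnj2 : ∀ j, 1 ≤ j → j ≤ g → 2 ≤ nj j)
    (γ : ℕ → Fin d → ℚ)
    (hγ1 : γ 1 = lam 1)
    (hγrec : ∀ j, 1 ≤ j → j < g → γ (j + 1) = (nj j : ℚ) • γ j + lam (j + 1) - lam j)
    (hlam0 : lam 0 = 0) (hγ0 : γ 0 = 0) (hnj0 : nj 0 = 1) :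
    ∀ j, 1 ≤ j → (hjg : j ≤ g) →
      -- (i) injectivity
      (Function.Injective (xiMinus g γ nj j) ∧ Function.Injective (xiPlus g γ nj j)) ∧
      -- (ii) images of σ_j^- and σ_j^+
      ((xiMinus g γ nj j) '' (sigmaMinus ρ lam j)
          = {x | ∃ y ∈ rhoJG g ρ γ nj (j - 1), ∃ z ∈ rhoJG g ρ γ nj j, x = y + z} ∧
        (xiPlus g γ nj j) '' (sigmaPlus ρ lam j)
          = {x | ∃ y ∈ rhoJG g ρ γ nj j, ∃ c : ℝ, 0 ≤ c ∧
              x = y + c • ((0, Pi.single (⟨j - 1, by omega⟩ : Fin g) (1 : ℝ))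
                : (Fin d → ℝ) × (Fin g → ℝ))}) ∧
      -- (iii) lattice points
      ((xiMinus g γ nj j) ''
          {p : (Fin d → ℝ) × ℝ | (∃ b ∈ Nlat Ms (j - 1), p.1 = icastR b) ∧ ∃ z : ℤ, p.2 = z}
        = Set.range (xiMinus g γ nj j)
            ∩ {q | ∃ (b : Fin d → ℤ) (c : Fin g → ℤ), q = (icastR b, fun k => (c k : ℝ))} ∧
       (xiPlus g γ nj j) ''
          {p : (Fin d → ℝ) × ℝ | (∃ b ∈ Nlat Ms (j - 1), p.1 = icastR b) ∧ ∃ z : ℤ, p.2 = z}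
        = Set.range (xiPlus g γ nj j)
            ∩ {q | ∃ (b : Fin d → ℤ) (c : Fin g → ℤ), q = (icastR b, fun k => (c k : ℝ))}) := by
  intro j hj1 hjg
  have hfin : j - 1 < g := by omega
  -- key recursion valid for all 1 ≤ i ≤ g (including i = 1 via conventions)
  have hkey : ∀ i, 1 ≤ i → i ≤ g →
      γ i = (nj (i - 1) : ℚ) • γ (i - 1) + lam i - lam (i - 1) := by
    intro i h1 h2
    rcases eq_or_lt_of_le h1 with h | h
    · rw [← h]; simp [hγ1, hγ0, hlam0, hnj0]
    · have := hγrec (i - 1) (by omega) (by omega)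
      rwa [show i - 1 + 1 = i by omega] at this
  have hpk : ∀ (a : Fin d → ℝ) (i : ℕ), 1 ≤ i → i ≤ g →
      pairQ a (γ i) = (nj (i - 1) : ℝ) * pairQ a (γ (i - 1))
        + pairQ a (lam i - lam (i - 1)) := by
    intro a i h1 h2
    rw [hkey i h1 h2, show (nj (i - 1) : ℚ) • γ (i - 1) + lam i - lam (i - 1)
        = ((nj (i - 1) : ℚ) • γ (i - 1)) + (lam i - lam (i - 1)) by abel,
      pairQ_add_right, pairQ_qsmul_right, pairQ_sub_right]
    push_cast
    ring
  have hLmem : qcastR (lam j - lam (j - 1)) ∈ dualSet ρ := by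
    rcases eq_or_lt_of_le hj1 with h | h
    · rw [← h]; simpa [hlam0] using (by simpa [qcastR] using hlam_mem 1 le_rfl (by omega) :
        qcastR (lam 1) ∈ dualSet ρ)
    · have := (hlam_lt (j - 1) (by omega) (by omega)).1
      unfold leRho at this
      rwa [show j - 1 + 1 = j by omega] at this
  have hLpos : ∀ a ∈ ρ, 0 ≤ pairQ a (lam j - lam (j - 1)) := by
    intro a ha
    have := hLmem a ha
    rwa [dotR_qcastR] at this
  -- lattice facts
  have hMstep : ∀ i, i + 1 ≤ g → Ms i ≤ Ms (i + 1) := by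
    intro i hi
    rw [hMs (i + 1) (by omega) hi]
    simpa using le_sup_left
  have hMs_mono : ∀ i i', i ≤ i' → i' ≤ g → Ms i ≤ Ms i' := by
    intro i i' h hg'
    induction i' with
    | zero => rw [show i = 0 by omega]
    | succ n ih =>
      rcases eq_or_lt_of_le h with h' | h'
      · rw [h']
      · exact le_trans (ih (by omega) (by omega)) (hMstep n hg')
  have hlam_in : ∀ i, i ≤ g → lam i ∈ Ms i := by
    intro i hi
    cases i with
    | zero => rw [hlam0]; exact zero_mem _
    | succ n =>
      rw [hMs (n + 1) (by omega) hi]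
      exact AddSubgroup.mem_sup_right (AddSubgroup.subset_closure rfl)
  have hγ_in : ∀ i, i ≤ g → γ i ∈ Ms i := by
    intro i hi
    induction i with
    | zero => rw [hγ0]; exact zero_mem _
    | succ n ih =>
      have hk := hkey (n + 1) (by omega) hi
      rw [show n + 1 - 1 = n by omega] at hk
      rw [hk]
      refine sub_mem (add_mem ?_ (hlam_in (n + 1) hi)) (hMstep n hi (hlam_in n (by omega)))
      rw [Nat.cast_smul_eq_nsmul]
      exact hMstep n hi (nsmul_mem (ih (by omega)) _)
  have hnlam : ∀ i, 1 ≤ i → i ≤ g → (nj i : ℚ) • lam i ∈ Ms (i - 1) := by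
    intro i h1 h2
    set H := (Ms (i - 1)).addSubgroupOf (Ms i) with hH
    have hcard : nj i = Nat.card (↥(Ms i) ⧸ H) := by rw [hnj i h1 h2]; rfl
    have hfin' : Finite (↥(Ms i) ⧸ H) := by
      refine Nat.finite_of_card_ne_zero ?_
      have := hnj2 i h1 h2
      omega
    have : Fintype (↥(Ms i) ⧸ H) := Fintype.ofFinite _
    set x : Ms i := ⟨lam i, hlam_in i h2⟩ with hx
    have hzero : (nj i) • (QuotientAddGroup.mk x : ↥(Ms i) ⧸ H) = 0 := by
      rw [hcard, Nat.card_eq_fintype_card]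
      exact card_nsmul_eq_zero
    rw [← QuotientAddGroup.mk_nsmul, QuotientAddGroup.eq_zero_iff,
      AddSubgroup.mem_addSubgroupOf] at hzero
    have : ((nj i • x : Ms i) : Fin d → ℚ) = (nj i : ℚ) • lam i := by
      push_cast [hx]
      rw [Nat.cast_smul_eq_nsmul]
    rwa [this] at hzero
  have hngam : ∀ i, 1 ≤ i → i ≤ g → (nj i : ℚ) • γ i ∈ Ms (i - 1) := by
    intro i h1 h2
    have hk : (nj i : ℚ) • γ i = ((nj i * nj (i - 1) : ℕ) : ℚ) • γ (i - 1)
        + (nj i : ℚ) • lam i - (nj i : ℚ) • lam (i - 1) := by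
      rw [hkey i h1 h2]
      push_cast
      rw [smul_sub, smul_add, smul_smul]
    rw [hk]
    refine sub_mem (add_mem ?_ (hnlam i h1 h2)) ?_
    · rw [Nat.cast_smul_eq_nsmul]
      exact nsmul_mem (hγ_in (i - 1) (by omega)) _
    · rw [Nat.cast_smul_eq_nsmul]
      exact nsmul_mem (hlam_in (i - 1) (by omega)) _
  -- structural equalities
  have hw : ∀ a : Fin d → ℝ,
      pairQ a (lam j - lam (j - 1)) + (nj (j - 1) : ℝ) * pairQ a (γ (j - 1))
        = pairQ a (γ j) := by
    intro a
    rw [hpk a j hj1 hjg]; ring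
  have hE1 : ∀ a : Fin d → ℝ, xiMinus g γ nj j (a, 0) = (a, fun k : Fin g =>
      if (k : ℕ) + 1 ≤ j - 1 then pairQ a (γ ((k : ℕ) + 1))
      else (∏ i ∈ Finset.Ico (j - 1) ((k : ℕ) + 1), (nj i : ℝ)) * pairQ a (γ (j - 1))) := by
    intro a
    unfold xiMinus
    refine Prod.ext rfl ?_
    funext k
    by_cases h : (k : ℕ) + 1 ≤ j - 1
    · simp [h]
    · simp only [if_neg h]
      rw [Finset.prod_eq_prod_Ico_succ_bot (show j - 1 < (k : ℕ) + 1 by omega),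
        show j - 1 + 1 = j by omega]
      ring
  have hE2 : ∀ a : Fin d → ℝ,
      xiMinus g γ nj j (a, pairQ a (lam j - lam (j - 1))) = (a, fun k : Fin g =>
      if (k : ℕ) + 1 ≤ j then pairQ a (γ ((k : ℕ) + 1))
      else (∏ i ∈ Finset.Ico j ((k : ℕ) + 1), (nj i : ℝ)) * pairQ a (γ j)) := by
    intro a
    unfold xiMinus
    refine Prod.ext rfl ?_
    funext k
    by_cases h1 : (k : ℕ) + 1 ≤ j - 1
    · simp [h1, show (k : ℕ) + 1 ≤ j by omega]
    · by_cases h2 : (k : ℕ) + 1 ≤ j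
      · have h3 : (k : ℕ) + 1 = j := by omega
        simp only [if_neg h1, if_pos h2]
        rw [h3, Finset.Ico_self, Finset.prod_empty, one_mul, hw a]
      · simp only [if_neg h1, if_neg h2]
        rw [← hw a]
  have hE4 : ∀ a : Fin d → ℝ,
      xiPlus g γ nj j (a, pairQ a (lam j - lam (j - 1))) = (a, fun k : Fin g =>
      if (k : ℕ) + 1 ≤ j then pairQ a (γ ((k : ℕ) + 1))
      else (∏ i ∈ Finset.Ico j ((k : ℕ) + 1), (nj i : ℝ)) * pairQ a (γ j)) := by
    intro a
    unfold xiPlus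
    refine Prod.ext rfl ?_
    funext k
    by_cases h1 : (k : ℕ) + 1 ≤ j - 1
    · simp [h1, show (k : ℕ) + 1 ≤ j by omega]
    · by_cases h2 : (k : ℕ) + 1 = j
      · simp only [if_neg h1, if_pos h2, if_pos (show (k : ℕ) + 1 ≤ j by omega)]
        rw [h2, hw a]
      · have h3 : ¬((k : ℕ) + 1 ≤ j) := by omega
        simp only [if_neg h1, if_neg h2, if_neg h3]
  have hE5 : ∀ (a : Fin d → ℝ) (v c : ℝ), xiPlus g γ nj j (a, v + c)
      = xiPlus g γ nj j (a, v) + c • ((0, Pi.single (⟨j - 1, hfin⟩ : Fin g) (1 : ℝ))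
          : (Fin d → ℝ) × (Fin g → ℝ)) := by
    intro a v c
    unfold xiPlus
    refine Prod.ext (by simp) ?_
    funext k
    simp only [Prod.snd_add, Prod.smul_snd, Pi.add_apply, Pi.smul_apply, smul_eq_mul]
    have hv : ((⟨j - 1, hfin⟩ : Fin g) : ℕ) = j - 1 := rfl
    by_cases h1 : (k : ℕ) + 1 ≤ j - 1
    · rw [Pi.single_eq_of_ne (Fin.ne_of_val_ne (show (k : ℕ) ≠ j - 1 by omega))]
      simp [h1]
    · by_cases h2 : (k : ℕ) + 1 = j
      · have hk : k = (⟨j - 1, hfin⟩ : Fin g) := Fin.ext (show (k : ℕ) = j - 1 by omega)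
        rw [hk, Pi.single_eq_same]
        simp only [hv, if_neg (show ¬(j - 1 + 1 ≤ j - 1) by omega),
          if_pos (show j - 1 + 1 = j by omega)]
        ring
      · rw [Pi.single_eq_of_ne (Fin.ne_of_val_ne (show (k : ℕ) ≠ j - 1 by omega))]
        simp only [if_neg h1, if_neg h2]
        ring
  have hlin : ∀ (a₁ a₂ : Fin d → ℝ) (v₁ v₂ : ℝ),
      xiMinus g γ nj j (a₁ + a₂, v₁ + v₂)
        = xiMinus g γ nj j (a₁, v₁) + xiMinus g γ nj j (a₂, v₂) := by
    intro a₁ a₂ v₁ v₂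
    unfold xiMinus
    refine Prod.ext rfl ?_
    funext k
    simp only [Prod.snd_add, Pi.add_apply]
    by_cases h : (k : ℕ) + 1 ≤ j - 1
    · simp [h, pairQ_add_left]
    · simp only [if_neg h, pairQ_add_left]
      ring
  have hrho0 : (0 : (Fin d → ℝ) × (Fin g → ℝ)) ∈ rhoJG g ρ γ nj j := by
    refine ⟨0, cone_zero hρ, ?_⟩
    have hz : (fun k : Fin g =>
        if (k : ℕ) + 1 ≤ j then pairQ (0 : Fin d → ℝ) (γ ((k : ℕ) + 1))
        else (∏ i ∈ Finset.Ico j ((k : ℕ) + 1), (nj i : ℝ)) * pairQ (0 : Fin d → ℝ) (γ j))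
        = (0 : Fin g → ℝ) := by
      funext k
      by_cases h : (k : ℕ) + 1 ≤ j <;> simp [h, pairQ_zero_left]
    rw [hz]
    rfl
  have hvmk : ∀ (m : ℕ) (h : m < g), ((⟨m, h⟩ : Fin g) : ℕ) = m := fun _ _ => rfl
  -- (i) injectivity
  have hinjM : Function.Injective (xiMinus g γ nj j) := by
    intro p q h
    have h1 := congrArg Prod.fst h
    simp only [xiMinus] at h1
    have h2 := congrFun (congrArg Prod.snd h) ⟨j - 1, hfin⟩
    simp only [xiMinus, hvmk, show j - 1 + 1 = j by omega,
      if_neg (show ¬(j ≤ j - 1) by omega), Finset.Ico_self, Finset.prod_empty, one_mul] at h2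
    rw [h1] at h2
    exact Prod.ext h1 (by linarith)
  have hinjP : Function.Injective (xiPlus g γ nj j) := by
    intro p q h
    have h1 := congrArg Prod.fst h
    simp only [xiPlus] at h1
    have h2 := congrFun (congrArg Prod.snd h) ⟨j - 1, hfin⟩
    simp only [xiPlus, hvmk, show j - 1 + 1 = j by omega,
      if_neg (show ¬(j ≤ j - 1) by omega), if_pos (show j = j from rfl), if_true] at h2
    rw [h1] at h2
    exact Prod.ext h1 (by linarith)
  -- (ii) image of sigmaMinus
  have himgM : xiMinus g γ nj j '' sigmaMinus ρ lam j
      = {x | ∃ y ∈ rhoJG g ρ γ nj (j - 1), ∃ z ∈ rhoJG g ρ γ nj j, x = y + z} := by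
    ext x
    constructor
    · rintro ⟨⟨a, v⟩, ⟨ha, hv0, hvL⟩, rfl⟩
      by_cases hL : pairQ a (lam j - lam (j - 1)) = 0
      · have hv : v = 0 := le_antisymm (by rw [hL] at hvL; exact hvL) hv0
        exact ⟨xiMinus g γ nj j (a, 0), ⟨a, ha, hE1 a⟩, 0, hrho0, by rw [hv, add_zero]⟩
      · set t := v / pairQ a (lam j - lam (j - 1)) with ht
        have hLpos' : 0 < pairQ a (lam j - lam (j - 1)) :=
          lt_of_le_of_ne (hLpos a ha) (Ne.symm hL)
        have ht0 : 0 ≤ t := div_nonneg hv0 (le_of_lt hLpos')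
        have ht1 : t ≤ 1 := (div_le_one hLpos').2 hvL
        refine ⟨xiMinus g γ nj j ((1 - t) • a, 0),
          ⟨_, cone_smul hρ (by linarith) ha, hE1 _⟩,
          xiMinus g γ nj j (t • a, pairQ (t • a) (lam j - lam (j - 1))),
          ⟨_, cone_smul hρ ht0 ha, hE2 _⟩, ?_⟩
        rw [← hlin]
        have hpt : (((1 - t) • a + t • a : Fin d → ℝ),
            (0 : ℝ) + pairQ (t • a) (lam j - lam (j - 1))) = ((a, v) : (Fin d → ℝ) × ℝ) := by
          refine Prod.ext ?_ ?_
          · show (1 - t) • a + t • a = a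
            rw [← add_smul, sub_add_cancel, one_smul]
          · show (0 : ℝ) + pairQ (t • a) (lam j - lam (j - 1)) = v
            rw [zero_add, pairQ_smul_left, ht, div_mul_cancel₀ v hL]
        rw [hpt]
    · rintro ⟨y, ⟨a1, ha1, rfl⟩, z, ⟨a2, ha2, rfl⟩, rfl⟩
      refine ⟨(a1 + a2, pairQ a2 (lam j - lam (j - 1))),
        ⟨cone_add hρ ha1 ha2, hLpos a2 ha2, ?_⟩, ?_⟩
      · rw [pairQ_add_left]
        have := hLpos a1 ha1
        linarith
      · rw [show ((a1 + a2 : Fin d → ℝ), pairQ a2 (lam j - lam (j - 1)))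
            = ((a1 + a2 : Fin d → ℝ), 0 + pairQ a2 (lam j - lam (j - 1))) by rw [zero_add],
          hlin, hE1 a1, hE2 a2]
  -- (ii) image of sigmaPlus
  have himgP : xiPlus g γ nj j '' sigmaPlus ρ lam j
      = {x | ∃ y ∈ rhoJG g ρ γ nj j, ∃ c : ℝ, 0 ≤ c ∧
          x = y + c • ((0, Pi.single (⟨j - 1, by omega⟩ : Fin g) (1 : ℝ))
            : (Fin d → ℝ) × (Fin g → ℝ))} := by
    ext x
    constructor
    · rintro ⟨⟨a, v⟩, ⟨ha, hv0, hvL⟩, rfl⟩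
      refine ⟨xiPlus g γ nj j (a, pairQ a (lam j - lam (j - 1))), ⟨a, ha, hE4 a⟩,
        v - pairQ a (lam j - lam (j - 1)), by linarith, ?_⟩
      rw [← hE5, show pairQ a (lam j - lam (j - 1)) + (v - pairQ a (lam j - lam (j - 1))) = v
        by ring]
    · rintro ⟨y, ⟨a, ha, rfl⟩, c, hc, rfl⟩
      have h0 := hLpos a ha
      refine ⟨(a, pairQ a (lam j - lam (j - 1)) + c), ⟨ha, ?_, ?_⟩, ?_⟩
      · show (0 : ℝ) ≤ pairQ a (lam j - lam (j - 1)) + c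
        linarith
      · show pairQ a (lam j - lam (j - 1)) ≤ pairQ a (lam j - lam (j - 1)) + c
        linarith
      · rw [hE5, hE4 a]
  -- (iii) lattice points
  have hcoordM : ∀ b : Fin d → ℤ, b ∈ Nlat Ms (j - 1) → ∀ (z : ℤ) (k : Fin g),
      ∃ ck : ℤ, (xiMinus g γ nj j (icastR b, (z : ℝ))).2 k = (ck : ℝ) := by
    intro b hb z k
    simp only [xiMinus]
    by_cases h : (k : ℕ) + 1 ≤ j - 1
    · obtain ⟨w, hwk⟩ := hb (γ ((k : ℕ) + 1))
        (hMs_mono ((k : ℕ) + 1) (j - 1) (by omega) (by omega) (hγ_in _ (by omega)))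
      exact ⟨w, by
        rw [if_pos h, pairQ_icastR, show PbHom b (γ ((k : ℕ) + 1)) = (w : ℚ) from hwk]
        norm_cast⟩
    · obtain ⟨w, hwk⟩ := hb (γ (j - 1)) (hγ_in (j - 1) (by omega))
      refine ⟨((∏ i ∈ Finset.Ico j ((k : ℕ) + 1), nj i : ℕ) : ℤ)
        * (z + (nj (j - 1) : ℤ) * w), ?_⟩
      rw [if_neg h, pairQ_icastR, show PbHom b (γ (j - 1)) = (w : ℚ) from hwk]
      push_cast
      ring
  have hcoordP : ∀ b : Fin d → ℤ, b ∈ Nlat Ms (j - 1) → ∀ (z : ℤ) (k : Fin g),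
      ∃ ck : ℤ, (xiPlus g γ nj j (icastR b, (z : ℝ))).2 k = (ck : ℝ) := by
    intro b hb z k
    simp only [xiPlus]
    by_cases h1 : (k : ℕ) + 1 ≤ j - 1
    · obtain ⟨w, hwk⟩ := hb (γ ((k : ℕ) + 1))
        (hMs_mono ((k : ℕ) + 1) (j - 1) (by omega) (by omega) (hγ_in _ (by omega)))
      exact ⟨w, by
        rw [if_pos h1, pairQ_icastR, show PbHom b (γ ((k : ℕ) + 1)) = (w : ℚ) from hwk]
        norm_cast⟩
    · by_cases h2 : (k : ℕ) + 1 = j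
      · obtain ⟨w, hwk⟩ := hb (γ (j - 1)) (hγ_in (j - 1) (by omega))
        refine ⟨z + (nj (j - 1) : ℤ) * w, ?_⟩
        rw [if_neg h1, if_pos h2, pairQ_icastR, show PbHom b (γ (j - 1)) = (w : ℚ) from hwk]
        push_cast
        ring
      · obtain ⟨w, hwk0⟩ := hb ((nj j : ℚ) • γ j) (hngam j hj1 hjg)
        have hwk : (nj j : ℚ) * PbHom b (γ j) = (w : ℚ) := by
          rw [← PbHom_smul]
          exact hwk0
        refine ⟨((∏ i ∈ Finset.Ico (j + 1) ((k : ℕ) + 1), nj i : ℕ) : ℤ) * w, ?_⟩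
        rw [if_neg h1, if_neg h2,
          Finset.prod_eq_prod_Ico_succ_bot (show j < (k : ℕ) + 1 by omega), pairQ_icastR]
        have hcast : (nj j : ℝ) * ((PbHom b (γ j) : ℚ) : ℝ) = (w : ℝ) := by
          exact_mod_cast congrArg (fun q : ℚ => (q : ℝ)) hwk
        push_cast
        rw [mul_comm ((nj j : ℝ)) (∏ i ∈ Finset.Ico (j + 1) ((k : ℕ) + 1), (nj i : ℝ)),
          mul_assoc, hcast]
  -- from integrality of the γ-coordinates to membership in N_{j-1}
  have hbN_of : ∀ b : Fin d → ℤ,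
      (∀ i, 1 ≤ i → i ≤ j - 1 → ∃ w : ℤ, PbHom b (γ i) = w) → b ∈ Nlat Ms (j - 1) := by
    intro b hPγ
    have hPlam : ∀ i, i ≤ j - 1 → ∃ w : ℤ, PbHom b (lam i) = w := by
      intro i
      induction i with
      | zero => intro _; exact ⟨0, by rw [hlam0, map_zero]; simp⟩
      | succ n ih =>
        intro h
        obtain ⟨w1, hw1⟩ := ih (by omega)
        obtain ⟨w2, hw2⟩ := hPγ (n + 1) (by omega) h
        have hγn : ∃ w : ℤ, PbHom b ((nj n : ℚ) • γ n) = w := by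
          rcases Nat.eq_zero_or_pos n with h0 | h0
          · exact ⟨0, by rw [h0, hγ0, smul_zero, map_zero]; simp⟩
          · obtain ⟨w3, hw3⟩ := hPγ n (by omega) (by omega)
            exact ⟨(nj n : ℤ) * w3, by rw [PbHom_smul, hw3]; push_cast; ring⟩
        obtain ⟨w3, hw3⟩ := hγn
        have hlamr : lam (n + 1) = γ (n + 1) - (nj n : ℚ) • γ n + lam n := by
          have hk2 := hkey (n + 1) (by omega) (by omega)
          rw [show n + 1 - 1 = n by omega] at hk2
          rw [hk2]; abel
        exact ⟨w2 - w3 + w1, by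
          rw [hlamr, map_add, map_sub, hw1, hw2, hw3]; push_cast; ring⟩
    have hS : ∀ m, m ≤ j - 1 →
        Ms m ≤ AddSubgroup.comap (PbHom b) (Int.castAddHom ℚ).range := by
      intro m
      induction m with
      | zero =>
        intro _
        rw [hM0]
        rintro u ⟨x, rfl⟩
        refine ⟨∑ i, b i * x i, ?_⟩
        show ((∑ i, b i * x i : ℤ) : ℚ) = PbHom b (intCastHomQ d x)
        rw [PbHom_apply]
        push_cast
        rfl
      | succ n ih =>
        intro h
        rw [hMs (n + 1) (by omega) (by omega), show n + 1 - 1 = n by omega]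
        refine sup_le (ih (by omega)) ((AddSubgroup.closure_le _).2 ?_)
        intro u hu
        rw [Set.mem_singleton_iff] at hu
        subst hu
        obtain ⟨w, hw⟩ := hPlam (n + 1) h
        exact ⟨w, hw.symm⟩
    intro u hu
    obtain ⟨w, hw⟩ := hS (j - 1) le_rfl hu
    exact ⟨w, hw.symm⟩
  have hlatM : xiMinus g γ nj j ''
      {p : (Fin d → ℝ) × ℝ | (∃ b ∈ Nlat Ms (j - 1), p.1 = icastR b) ∧ ∃ z : ℤ, p.2 = z}
      = Set.range (xiMinus g γ nj j)
        ∩ {q | ∃ (b : Fin d → ℤ) (c : Fin g → ℤ), q = (icastR b, fun k => (c k : ℝ))} := by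
    ext x
    constructor
    · rintro ⟨p, ⟨⟨b, hb, hp1⟩, z, hp2⟩, rfl⟩
      have hp : p = (icastR b, (z : ℝ)) := Prod.ext hp1 hp2
      refine ⟨⟨p, rfl⟩, b, fun k => (hcoordM b hb z k).choose, ?_⟩
      rw [hp]
      refine Prod.ext rfl ?_
      funext k
      exact (hcoordM b hb z k).choose_spec
    · rintro ⟨⟨p, rfl⟩, b, c, hq⟩
      have hp1 : p.1 = icastR b := by
        have := congrArg Prod.fst hq
        simpa [xiMinus] using this
      have hPγ : ∀ i, 1 ≤ i → i ≤ j - 1 → ∃ w : ℤ, PbHom b (γ i) = w := by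
        intro i h1 h2
        have hk := congrFun (congrArg Prod.snd hq) ⟨i - 1, by omega⟩
        simp only [xiMinus, hvmk] at hk
        rw [show i - 1 + 1 = i by omega] at hk
        rw [if_pos (show i ≤ j - 1 from h2), hp1, pairQ_icastR] at hk
        exact ⟨c ⟨i - 1, by omega⟩, by exact_mod_cast hk⟩
      have hbN : b ∈ Nlat Ms (j - 1) := hbN_of b hPγ
      have hk2 := congrFun (congrArg Prod.snd hq) ⟨j - 1, hfin⟩
      simp only [xiMinus, hvmk, show j - 1 + 1 = j by omega,
        if_neg (show ¬(j ≤ j - 1) by omega), Finset.Ico_self, Finset.prod_empty,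
        one_mul] at hk2
      obtain ⟨w, hw⟩ := hbN (γ (j - 1)) (hγ_in (j - 1) (by omega))
      rw [hp1, pairQ_icastR, show PbHom b (γ (j - 1)) = (w : ℚ) from hw] at hk2
      have hz : p.2 = ((c ⟨j - 1, hfin⟩ - (nj (j - 1) : ℤ) * w : ℤ) : ℝ) := by
        push_cast
        push_cast at hk2
        linarith
      exact ⟨p, ⟨⟨b, hbN, hp1⟩, ⟨_, hz⟩⟩, rfl⟩
  have hlatP : xiPlus g γ nj j ''
      {p : (Fin d → ℝ) × ℝ | (∃ b ∈ Nlat Ms (j - 1), p.1 = icastR b) ∧ ∃ z : ℤ, p.2 = z}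
      = Set.range (xiPlus g γ nj j)
        ∩ {q | ∃ (b : Fin d → ℤ) (c : Fin g → ℤ), q = (icastR b, fun k => (c k : ℝ))} := by
    ext x
    constructor
    · rintro ⟨p, ⟨⟨b, hb, hp1⟩, z, hp2⟩, rfl⟩
      have hp : p = (icastR b, (z : ℝ)) := Prod.ext hp1 hp2
      refine ⟨⟨p, rfl⟩, b, fun k => (hcoordP b hb z k).choose, ?_⟩
      rw [hp]
      refine Prod.ext rfl ?_
      funext k
      exact (hcoordP b hb z k).choose_spec
    · rintro ⟨⟨p, rfl⟩, b, c, hq⟩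
      have hp1 : p.1 = icastR b := by
        have := congrArg Prod.fst hq
        simpa [xiPlus] using this
      have hPγ : ∀ i, 1 ≤ i → i ≤ j - 1 → ∃ w : ℤ, PbHom b (γ i) = w := by
        intro i h1 h2
        have hk := congrFun (congrArg Prod.snd hq) ⟨i - 1, by omega⟩
        simp only [xiPlus, hvmk] at hk
        rw [show i - 1 + 1 = i by omega] at hk
        rw [if_pos (show i ≤ j - 1 from h2), hp1, pairQ_icastR] at hk
        exact ⟨c ⟨i - 1, by omega⟩, by exact_mod_cast hk⟩
      have hbN : b ∈ Nlat Ms (j - 1) := hbN_of b hPγ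
      have hk2 := congrFun (congrArg Prod.snd hq) ⟨j - 1, hfin⟩
      simp only [xiPlus, hvmk, show j - 1 + 1 = j by omega,
        if_neg (show ¬(j ≤ j - 1) by omega), if_pos (show j = j from rfl), if_true] at hk2
      obtain ⟨w, hw⟩ := hbN (γ (j - 1)) (hγ_in (j - 1) (by omega))
      rw [hp1, pairQ_icastR, show PbHom b (γ (j - 1)) = (w : ℚ) from hw] at hk2
      have hz : p.2 = ((c ⟨j - 1, hfin⟩ - (nj (j - 1) : ℤ) * w : ℤ) : ℝ) := by
        push_cast
        push_cast at hk2
        linarith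
      exact ⟨p, ⟨⟨b, hbN, hp1⟩, ⟨_, hz⟩⟩, rfl⟩
  exact ⟨⟨hinjM, hinjP⟩, ⟨himgM, himgP⟩, hlatM, hlatP⟩
end
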